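/- arXiv:2011.09498 — 10 statements merged into one kernel-verified Lean document; each statement's English description precedes it below -/
import Mathlib

section
/- Let H, F be Hilbert spaces, A ∈ L(H,F), b ∈ F, and W ∈ L(F) positive semidefinite with W^{1/2} Hilbert–Schmidt. If W^{1/2}A is not bounded below (e.g., if dim H = ∞, since then the compact operator W^{1/2}A cannot be bounded below), and b ∉ range(A) + ker(W), then the infimum over X ∈ L(H,F) and x ∈ H of ‖W^{1/2}(A−X)‖₂² + ‖W^{1/2}(Xx−b)‖² equals 0 but is not attained; in particular the weighted total least squares problem has no solution. -/
set_option maxHeartbeats 1000000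

open scoped InnerProductSpace

section aux

variable {H F ι ι' : Type*} [NormedAddCommGroup H] [InnerProductSpace ℝ H] [CompleteSpace H]
    [NormedAddCommGroup F] [InnerProductSpace ℝ F] [CompleteSpace F]

lemma my_parseval (e : HilbertBasis ι ℝ H) (y : H) :
    HasSum (fun i => ⟪y, e i⟫_ℝ ^ 2) (‖y‖ ^ 2) := by
  have h := e.hasSum_inner_mul_inner y y
  have : (fun i => ⟪y, e i⟫_ℝ * ⟪e i, y⟫_ℝ) = fun i => ⟪y, e i⟫_ℝ ^ 2 := by
    funext i; rw [real_inner_comm (e i) y, sq]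
  rw [this, real_inner_self_eq_norm_sq] at h
  exact h

lemma my_summable (R : F →L[ℝ] F) (hRsa : IsSelfAdjoint R)
    (f : HilbertBasis ι' ℝ F) (hHS : Summable fun i => ‖R (f i)‖ ^ 2)
    (e : HilbertBasis ι ℝ H) (T : H →L[ℝ] F) :
    Summable fun i => ‖(R.comp T) (e i)‖ ^ 2 := by

  classical
  set T' := ContinuousLinearMap.adjoint T with hT'
  set g : ι' × ι → ℝ := fun p => ⟪T' (R (f p.1)), e p.2⟫_ℝ ^ 2 with hg
  have hg0 : 0 ≤ g := fun p => sq_nonneg _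
  have hA : ∀ j, HasSum (fun i => g (j, i)) (‖T' (R (f j))‖ ^ 2) :=
    fun j => my_parseval e (T' (R (f j)))
  have hB : Summable fun j => ‖T' (R (f j))‖ ^ 2 := by
    refine Summable.of_nonneg_of_le (fun j => sq_nonneg _) (fun j => ?_) (hHS.mul_left (‖T'‖ ^ 2))
    calc ‖T' (R (f j))‖ ^ 2 ≤ (‖T'‖ * ‖R (f j)‖) ^ 2 := by
          apply sq_le_sq' <;> nlinarith [T'.le_opNorm (R (f j)), norm_nonneg (T' (R (f j))),
            norm_nonneg (R (f j)), T'.opNorm_nonneg]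
      _ = ‖T'‖ ^ 2 * ‖R (f j)‖ ^ 2 := by ring
  have hC : Summable g := by
    refine (summable_prod_of_nonneg hg0).2 ⟨fun j => (hA j).summable, ?_⟩
    refine hB.congr fun j => ?_
    exact ((hA j).tsum_eq).symm
  have hD : Summable fun p : ι × ι' => g (p.2, p.1) := by
    have := (Equiv.prodComm ι ι').summable_iff.2 hC
    exact this.congr fun p => rfl
  have hE := (summable_prod_of_nonneg (f := fun p : ι × ι' => g (p.2, p.1))
    (fun p => hg0 _)).1 hD
  refine hE.2.congr fun i => ?_
  -- ∑' j, g (j, i) = ‖R (T (e i))‖ ^ 2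
  have key : ∀ j, g (j, i) = ⟪R (T (e i)), f j⟫_ℝ ^ 2 := by
    intro j
    have h1 : ⟪T' (R (f j)), e i⟫_ℝ = ⟪R (f j), T (e i)⟫_ℝ :=
      ContinuousLinearMap.adjoint_inner_left T (e i) (R (f j))
    have h2 : ⟪R (f j), T (e i)⟫_ℝ = ⟪f j, R (T (e i))⟫_ℝ :=
      hRsa.isSymmetric (f j) (T (e i))
    simp only [hg]
    rw [h1, h2, real_inner_comm]
  have : (∑' j, g (j, i)) = ‖R (T (e i))‖ ^ 2 := by
    rw [tsum_congr key, (my_parseval f (R (T (e i)))).tsum_eq]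
  simpa [ContinuousLinearMap.comp_apply] using this
end aux

/-- Let `H, F` be Hilbert spaces, `A ∈ L(H,F)`, `b ∈ F`, `W ∈ L(F)` positive
semidefinite with square root `R = W^{1/2}` Hilbert–Schmidt (summable squared norms over a
Hilbert basis of `F`).  If `W^{1/2}A` is not bounded below and `b ∉ range A + ker W`, then the
infimum over `X ∈ L(H,F)`, `x ∈ H` of `‖W^{1/2}(A−X)‖₂² + ‖W^{1/2}(Xx−b)‖²` (Hilbert–Schmidt
norm computed along a Hilbert basis `e` of `H`) is `0` but never attained: every value of the
objective is positive while values get arbitrarily small; in particular the weighted total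
least squares problem has no solution. -/
theorem stmt1_WTLS_no_solution
    {H F ι ι' : Type*} [NormedAddCommGroup H] [InnerProductSpace ℝ H] [CompleteSpace H]
    [NormedAddCommGroup F] [InnerProductSpace ℝ F] [CompleteSpace F]
    (A : H →L[ℝ] F) (b : F) (W R : F →L[ℝ] F)
    (hR : R.IsPositive) (hRW : R.comp R = W)
    (f : HilbertBasis ι' ℝ F) (hHS : Summable fun i => ‖R (f i)‖ ^ 2)
    (e : HilbertBasis ι ℝ H)
    (hnb : ¬ ∃ c : ℝ, 0 < c ∧ ∀ x : H, c * ‖x‖ ≤ ‖R (A x)‖)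
    (hb : b ∉ LinearMap.range (A : H →ₗ[ℝ] F) + LinearMap.ker (W : F →ₗ[ℝ] F)) :
    (∀ (X : H →L[ℝ] F) (x : H),
        0 < (∑' i, ‖(R.comp (A - X)) (e i)‖ ^ 2) + ‖R (X x - b)‖ ^ 2) ∧
    (∀ ε : ℝ, 0 < ε → ∃ (X : H →L[ℝ] F) (x : H),
        (∑' i, ‖(R.comp (A - X)) (e i)‖ ^ 2) + ‖R (X x - b)‖ ^ 2 < ε) ∧
    ¬ ∃ (X₀ : H →L[ℝ] F) (x₀ : H), ∀ (X : H →L[ℝ] F) (x : H),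
        (∑' i, ‖(R.comp (A - X₀)) (e i)‖ ^ 2) + ‖R (X₀ x₀ - b)‖ ^ 2 ≤
          (∑' i, ‖(R.comp (A - X)) (e i)‖ ^ 2) + ‖R (X x - b)‖ ^ 2 := by
  have hRsa : IsSelfAdjoint R := hR.isSelfAdjoint
  have hWapp : ∀ z : F, W z = R (R z) := by
    intro z; rw [← hRW]; rfl
  -- Part 1: positivity
  have hpos : ∀ (X : H →L[ℝ] F) (x : H),
      0 < (∑' i, ‖(R.comp (A - X)) (e i)‖ ^ 2) + ‖R (X x - b)‖ ^ 2 := by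
    intro X x
    by_contra hcon
    push_neg at hcon
    have hsum := my_summable R hRsa f hHS e (A - X)
    have hS0 : 0 ≤ ∑' i, ‖(R.comp (A - X)) (e i)‖ ^ 2 :=
      tsum_nonneg fun i => sq_nonneg _
    have hq0 : 0 ≤ ‖R (X x - b)‖ ^ 2 := sq_nonneg _
    have hS : (∑' i, ‖(R.comp (A - X)) (e i)‖ ^ 2) = 0 := by linarith
    have hq : ‖R (X x - b)‖ = 0 := by
      have : ‖R (X x - b)‖ ^ 2 = 0 := by linarith
      exact pow_eq_zero_iff (by norm_num) |>.1 this
    have hterm : ∀ i, R ((A - X) (e i)) = 0 := by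
      intro i
      have h1 : ‖(R.comp (A - X)) (e i)‖ ^ 2 ≤ ∑' j, ‖(R.comp (A - X)) (e j)‖ ^ 2 :=
        hsum.le_tsum i fun j _ => sq_nonneg _
      have h2 : ‖(R.comp (A - X)) (e i)‖ ^ 2 = 0 := le_antisymm (hS ▸ h1) (sq_nonneg _)
      have h3 : ‖(R.comp (A - X)) (e i)‖ = 0 := pow_eq_zero_iff (by norm_num) |>.1 h2
      simpa [ContinuousLinearMap.comp_apply] using norm_eq_zero.1 h3
    have hzero : ∀ u : H, R ((A - X) u) = 0 := by
      intro u
      have hrepr := (e.hasSum_repr u).mapL (R.comp (A - X))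
      have : HasSum (fun _ : ι => (0 : F)) ((R.comp (A - X)) u) := by
        refine hrepr.congr_fun fun i => ?_
        rw [map_smul, ContinuousLinearMap.comp_apply, hterm i, smul_zero]
      have h0 := this.unique hasSum_zero
      simpa [ContinuousLinearMap.comp_apply] using h0
    apply hb
    have hbeq : b = A x + ((X - A) x - (X x - b)) := by
      simp only [ContinuousLinearMap.sub_apply]
      abel
    rw [hbeq, Submodule.add_eq_sup]
    refine Submodule.add_mem_sup (LinearMap.mem_range_self _ x) ?_
    refine Submodule.sub_mem _ ?_ ?_
    · have : (X - A) x = -((A - X) x) := by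
        simp [ContinuousLinearMap.sub_apply]
      refine LinearMap.mem_ker.2 ?_
      show W ((X - A) x) = 0
      rw [this, map_neg, hWapp, hzero, map_zero, neg_zero]
    · refine LinearMap.mem_ker.2 ?_
      show W (X x - b) = 0
      rw [hWapp, norm_eq_zero.1 hq, map_zero]
  have hsmall : ∀ ε : ℝ, 0 < ε → ∃ (X : H →L[ℝ] F) (x : H),
      (∑' i, ‖(R.comp (A - X)) (e i)‖ ^ 2) + ‖R (X x - b)‖ ^ 2 < ε := by
    intro ε hε
    push_neg at hnb
    have hc : (0:ℝ) < Real.sqrt ε / 2 := by positivity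
    obtain ⟨x₀, hx₀⟩ := hnb (Real.sqrt ε / 2) hc
    have hx₀ne : ‖x₀‖ ≠ 0 := by
      intro h0
      rw [h0, mul_zero] at hx₀
      exact absurd hx₀ (not_lt.2 (norm_nonneg _))
    have hx₀pos : 0 < ‖x₀‖ := lt_of_le_of_ne (norm_nonneg _) (Ne.symm hx₀ne)
    set t : ℝ := max 1 ((2 * ‖R b‖ + 1) / (Real.sqrt ε * ‖x₀‖)) with ht
    have htpos : 0 < t := lt_of_lt_of_le one_pos (le_max_left _ _)
    set x : H := t • x₀ with hxdef
    have hxnorm : ‖x‖ = t * ‖x₀‖ := by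
      rw [hxdef, norm_smul, Real.norm_eq_abs, abs_of_pos htpos]
    have hxpos : 0 < ‖x‖ := by rw [hxnorm]; positivity
    have hRAx : ‖R (A x)‖ < (Real.sqrt ε / 2) * ‖x‖ := by
      have : R (A x) = t • R (A x₀) := by rw [hxdef, map_smul, map_smul]
      rw [this, norm_smul, Real.norm_eq_abs, abs_of_pos htpos, hxnorm]
      calc t * ‖R (A x₀)‖ < t * (Real.sqrt ε / 2 * ‖x₀‖) := by
            exact mul_lt_mul_of_pos_left hx₀ htpos
        _ = Real.sqrt ε / 2 * (t * ‖x₀‖) := by ring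
    have hRb : ‖R b‖ < (Real.sqrt ε / 2) * ‖x‖ := by
      have h1 : (2 * ‖R b‖ + 1) / (Real.sqrt ε * ‖x₀‖) ≤ t := le_max_right _ _
      have hse : 0 < Real.sqrt ε := Real.sqrt_pos.2 hε
      have h2 : 2 * ‖R b‖ + 1 ≤ t * (Real.sqrt ε * ‖x₀‖) := by
        rw [div_le_iff₀ (by positivity)] at h1
        linarith
      rw [hxnorm]
      nlinarith [norm_nonneg (R b)]
    -- the rank one modification
    set y : H := (‖x‖ ^ 2)⁻¹ • x with hydef
    set X : H →L[ℝ] F := A + (innerSL ℝ y).smulRight (b - A x) with hXdef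
    have hinner_yx : ⟪y, x⟫_ℝ = 1 := by
      rw [hydef, real_inner_smul_left, real_inner_self_eq_norm_sq]
      field_simp
    have hXx : X x = b := by
      rw [hXdef]
      simp only [ContinuousLinearMap.add_apply, ContinuousLinearMap.smulRight_apply,
        innerSL_apply_apply, hinner_yx, one_smul]
      abel
    have hAX : ∀ u : H, (A - X) u = -(⟪y, u⟫_ℝ • (b - A x)) := by
      intro u
      rw [hXdef]
      simp only [ContinuousLinearMap.sub_apply, ContinuousLinearMap.add_apply,
        ContinuousLinearMap.smulRight_apply, innerSL_apply_apply]
      abel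
    have hynorm : ‖y‖ ^ 2 = (‖x‖ ^ 2)⁻¹ := by
      rw [hydef, norm_smul, Real.norm_eq_abs, abs_of_pos (by positivity), mul_pow]
      field_simp
    have hsum : HasSum (fun i => ‖(R.comp (A - X)) (e i)‖ ^ 2)
        ((‖x‖ ^ 2)⁻¹ * ‖R (b - A x)‖ ^ 2) := by
      have h := (my_parseval e y).mul_right (‖R (b - A x)‖ ^ 2)
      rw [hynorm] at h
      refine h.congr_fun fun i => ?_
      rw [ContinuousLinearMap.comp_apply, hAX, map_neg, map_smul, norm_neg, norm_smul,
        Real.norm_eq_abs, mul_pow, sq_abs]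
    refine ⟨X, x, ?_⟩
    rw [hsum.tsum_eq, hXx, sub_self, map_zero, norm_zero]
    have hbound : ‖R (b - A x)‖ < Real.sqrt ε * ‖x‖ := by
      calc ‖R (b - A x)‖ = ‖R b - R (A x)‖ := by rw [map_sub]
        _ ≤ ‖R b‖ + ‖R (A x)‖ := norm_sub_le _ _
        _ < Real.sqrt ε / 2 * ‖x‖ + Real.sqrt ε / 2 * ‖x‖ := by linarith
        _ = Real.sqrt ε * ‖x‖ := by ring
    have hsq : ‖R (b - A x)‖ ^ 2 < ε * ‖x‖ ^ 2 := by
      have hse : 0 < Real.sqrt ε := Real.sqrt_pos.2 hε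
      have h2 : (Real.sqrt ε * ‖x‖) ^ 2 = ε * ‖x‖ ^ 2 := by
        rw [mul_pow, Real.sq_sqrt hε.le]
      nlinarith [norm_nonneg (R (b - A x))]
    have hx2 : 0 < ‖x‖ ^ 2 := by positivity
    have hinvpos : 0 < (‖x‖ ^ 2)⁻¹ := by positivity
    have hinv1 : (‖x‖ ^ 2)⁻¹ * ‖x‖ ^ 2 = 1 := inv_mul_cancel₀ hx2.ne'
    nlinarith [mul_lt_mul_of_pos_left hsq hinvpos]
  refine ⟨hpos, hsmall, ?_⟩
  rintro ⟨X₀, x₀, hmin⟩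
  obtain ⟨X, x, hlt⟩ := hsmall _ (hpos X₀ x₀)
  exact absurd (hmin X x) (not_le.2 hlt)
end

section
/- Let E₀, E₁ be normed spaces, W₀ ∈ L(E₁) with W₀A not bounded below, W₁ ∈ L(E₁), b ∉ range(A)+ker(W₀)+ker(W₁), and A ∈ L(E₀,E₁). For every ε > 0 there exist X₀ ∈ L(E₀,E₁) and y ∈ E₀ such that W₁(X₀y − b) = 0 and ‖W₀(A − X₀)‖_{op} ≤ ε(‖W₀b‖ + 1); consequently the infimum of ‖W₀(A−X)‖_{op}² + ‖W₁(Xx−b)‖² over (X,x) is 0 and is not attained. -/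
/-- Normed spaces `E₀ ≠ {0}`, `E₁`; `W₀, W₁ ∈ L(E₁)`, `A ∈ L(E₀,E₁)` with
`W₀A` not bounded below (for every `ε > 0` there is a unit vector `x` with `‖W₀Ax‖ < ε`),
and `b ∉ range A + ker W₀ + ker W₁`.  Then for every `ε > 0` there exist
`X₀ ∈ L(E₀,E₁)` and `y ∈ E₀` with `W₁(X₀y − b) = 0` and
`‖W₀ ∘ (A − X₀)‖ ≤ ε(‖W₀b‖ + 1)`; consequently the infimum of
`‖W₀(A−X)‖² + ‖W₁(Xx−b)‖²` is `0` (values get arbitrarily small) and is never attained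
(every value is positive). -/
theorem stmt2_TLS_inf_zero_not_attained
    {E₀ E₁ : Type*} [NormedAddCommGroup E₀] [NormedSpace ℝ E₀] [Nontrivial E₀]
    [NormedAddCommGroup E₁] [NormedSpace ℝ E₁]
    (W₀ W₁ : E₁ →L[ℝ] E₁) (A : E₀ →L[ℝ] E₁) (b : E₁)
    (hnb : ∀ ε : ℝ, 0 < ε → ∃ x : E₀, ‖x‖ = 1 ∧ ‖W₀ (A x)‖ < ε)
    (hb : b ∉ LinearMap.range (A : E₀ →ₗ[ℝ] E₁) + LinearMap.ker (W₀ : E₁ →ₗ[ℝ] E₁) + LinearMap.ker (W₁ : E₁ →ₗ[ℝ] E₁)) :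
    (∀ ε : ℝ, 0 < ε → ∃ (X₀ : E₀ →L[ℝ] E₁) (y : E₀),
        W₁ (X₀ y - b) = 0 ∧ ‖W₀.comp (A - X₀)‖ ≤ ε * (‖W₀ b‖ + 1)) ∧
    (∀ (X : E₀ →L[ℝ] E₁) (x : E₀),
        0 < ‖W₀.comp (A - X)‖ ^ 2 + ‖W₁ (X x - b)‖ ^ 2) ∧
    (∀ ε : ℝ, 0 < ε → ∃ (X : E₀ →L[ℝ] E₁) (x : E₀),
        ‖W₀.comp (A - X)‖ ^ 2 + ‖W₁ (X x - b)‖ ^ 2 < ε) := by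
  have key : ∀ ε : ℝ, 0 < ε → ∃ (X₀ : E₀ →L[ℝ] E₁) (y : E₀),
      W₁ (X₀ y - b) = 0 ∧ ‖W₀.comp (A - X₀)‖ ≤ ε * (‖W₀ b‖ + 1) := by
    intro ε hε
    obtain ⟨x, hx1, hx2⟩ := hnb ε hε
    have hx0 : x ≠ 0 := by intro h; rw [h, norm_zero] at hx1; norm_num at hx1
    obtain ⟨g, hg1, hg2⟩ := exists_dual_vector ℝ x (norm_ne_zero_iff.mpr hx0)
    rw [hx1] at hg2
    set v : E₁ := ε • b - A x with hv
    refine ⟨A + g.smulRight v, ε⁻¹ • x, ?_, ?_⟩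
    · have hXy : (A + (g.smulRight v)) (ε⁻¹ • x) = b := by
        simp only [ContinuousLinearMap.add_apply, ContinuousLinearMap.smulRight_apply,
          map_smul, hg2, hv]
        norm_num [smul_sub, smul_smul, inv_mul_cancel₀ hε.ne']
      rw [hXy, sub_self, map_zero]
    · have hA : A - (A + g.smulRight v) = -(g.smulRight v) := by abel
      rw [hA]
      have hcomp : W₀.comp (-(g.smulRight v)) = -(g.smulRight (W₀ v)) := by
        ext z; simp
      rw [hcomp, norm_neg, ContinuousLinearMap.norm_smulRight_apply, hg1, one_mul]
      have hle : ‖W₀ v‖ ≤ ε * ‖W₀ b‖ + ‖W₀ (A x)‖ := by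
        rw [hv, map_sub, map_smul]
        calc ‖ε • W₀ b - W₀ (A x)‖ ≤ ‖ε • W₀ b‖ + ‖W₀ (A x)‖ := norm_sub_le _ _
        _ = ε * ‖W₀ b‖ + ‖W₀ (A x)‖ := by rw [norm_smul, Real.norm_eq_abs, abs_of_pos hε]
      nlinarith [hx2, norm_nonneg (W₀ b)]
  have pos : ∀ (X : E₀ →L[ℝ] E₁) (x : E₀),
      0 < ‖W₀.comp (A - X)‖ ^ 2 + ‖W₁ (X x - b)‖ ^ 2 := by
    intro X x
    rcases lt_or_eq_of_le (by positivity : (0:ℝ) ≤ ‖W₀.comp (A - X)‖ ^ 2 + ‖W₁ (X x - b)‖ ^ 2)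
      with h | h
    · exact h
    exfalso
    have h1 : ‖W₀.comp (A - X)‖ = 0 := by
      nlinarith [norm_nonneg (W₀.comp (A - X)), norm_nonneg (W₁ (X x - b)),
        sq_nonneg ‖W₀.comp (A - X)‖, sq_nonneg ‖W₁ (X x - b)‖]
    have h2 : W₁ (X x - b) = 0 := by
      have h2' : ‖W₁ (X x - b)‖ = 0 := by
        nlinarith [norm_nonneg (W₀.comp (A - X)), norm_nonneg (W₁ (X x - b)),
          sq_nonneg ‖W₀.comp (A - X)‖, sq_nonneg ‖W₁ (X x - b)‖]
      exact norm_eq_zero.mp h2'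
    have hc : W₀.comp (A - X) = 0 := norm_eq_zero.mp h1
    have hk0 : W₀ (X x - A x) = 0 := by
      have h3 := congrArg (fun T : E₀ →L[ℝ] E₁ => T x) hc
      simp only [ContinuousLinearMap.comp_apply, ContinuousLinearMap.sub_apply,
        ContinuousLinearMap.zero_apply] at h3
      rw [map_sub]
      rw [map_sub, sub_eq_zero] at h3
      rw [sub_eq_zero]
      exact h3.symm
    have hk1 : W₁ (b - X x) = 0 := by
      rw [map_sub]
      rw [map_sub, sub_eq_zero] at h2
      rw [sub_eq_zero]
      exact h2.symm
    apply hb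
    have hdecomp : b = (A x + (X x - A x)) + (b - X x) := by abel
    rw [hdecomp, Submodule.add_eq_sup, Submodule.add_eq_sup]
    exact Submodule.add_mem_sup
      (Submodule.add_mem_sup ⟨x, rfl⟩ (LinearMap.mem_ker.mpr hk0))
      (LinearMap.mem_ker.mpr hk1)
  refine ⟨key, pos, ?_⟩
  intro ε hε
  have hC : (0:ℝ) < ‖W₀ b‖ + 1 := by positivity
  obtain ⟨X₀, y, h1, h2⟩ := key (Real.sqrt ε / (2 * (‖W₀ b‖ + 1))) (by positivity)
  refine ⟨X₀, y, ?_⟩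
  rw [h1, norm_zero]
  have h3 : Real.sqrt ε / (2 * (‖W₀ b‖ + 1)) * (‖W₀ b‖ + 1) = Real.sqrt ε / 2 := by
    field_simp
  rw [h3] at h2
  nlinarith [Real.sq_sqrt hε.le, Real.sqrt_nonneg ε,
    norm_nonneg (W₀.comp (A - X₀))]
end

section
/- Let H, F be Hilbert spaces, A ∈ L(H,F), b ∈ F, W ∈ L(F)⁺ with W^{1/2} ∈ S₂ injective on its action from H infinite dimensional, and suppose A is not injective. If b ∉ range(A) + ker(W), then the weighted total least squares problem min over X ∈ L(H,F), x ∈ H of ‖A−X‖²_{2,W} + ‖Xx−b‖²_W has no solution. -/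
open RealInnerProductSpace

lemma parseval_norm_sq {E ι : Type*} [NormedAddCommGroup E] [InnerProductSpace ℝ E]
    [CompleteSpace E] (e : HilbertBasis ι ℝ E) (x : E) :
    HasSum (fun i => ⟪x, e i⟫ ^ 2) (‖x‖ ^ 2) := by
  have h := e.hasSum_inner_mul_inner x x
  rw [real_inner_self_eq_norm_sq] at h
  refine h.congr_fun fun i => ?_
  rw [sq, real_inner_comm]

/-- Composition of a self-adjoint Hilbert–Schmidt operator with a bounded operator is
Hilbert–Schmidt. -/
lemma hs_comp_summable {H F ι ι' : Type*}
    [NormedAddCommGroup H] [InnerProductSpace ℝ H] [CompleteSpace H]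
    [NormedAddCommGroup F] [InnerProductSpace ℝ F] [CompleteSpace F]
    (e : HilbertBasis ι ℝ H) (f : HilbertBasis ι' ℝ F) (R : F →L[ℝ] F)
    (hRsa : IsSelfAdjoint R) (hHS : Summable fun j => ‖R (f j)‖ ^ 2)
    (T : H →L[ℝ] F) : Summable fun i => ‖R (T (e i))‖ ^ 2 := by
  classical
  set T' := ContinuousLinearMap.adjoint T with hT'
  have key : ∀ i j, ⟪R (T (e i)), f j⟫ = ⟪e i, T' (R (f j))⟫ := by
    intro i j
    rw [hT', ContinuousLinearMap.adjoint_inner_right, ← ContinuousLinearMap.adjoint_inner_left R,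
      hRsa.adjoint_eq]
  -- the swapped family is summable
  have hswap : Summable fun q : ι' × ι => ⟪R (T (e q.2)), f q.1⟫ ^ 2 := by
    rw [summable_prod_of_nonneg (fun q => sq_nonneg _)]
    refine ⟨fun j => ?_, ?_⟩
    · refine (parseval_norm_sq e (T' (R (f j)))).summable.congr fun i => ?_
      rw [key, real_inner_comm]
    · have hts : ∀ j : ι', (∑' i, ⟪R (T (e i)), f j⟫ ^ 2) = ‖T' (R (f j))‖ ^ 2 := by
        intro j
        rw [← (parseval_norm_sq e (T' (R (f j)))).tsum_eq]
        exact tsum_congr fun i => by rw [key, real_inner_comm]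
      simp only [hts]
      refine Summable.of_nonneg_of_le (fun j => sq_nonneg _) (fun j => ?_)
        (hHS.mul_left (‖T'‖ ^ 2))
      calc ‖T' (R (f j))‖ ^ 2 ≤ (‖T'‖ * ‖R (f j)‖) ^ 2 := by
            gcongr; exact T'.le_opNorm _
        _ = ‖T'‖ ^ 2 * ‖R (f j)‖ ^ 2 := by ring
  have hprod : Summable fun p : ι × ι' => ⟪R (T (e p.1)), f p.2⟫ ^ 2 :=
    (Equiv.prodComm ι' ι).summable_iff.mp hswap
  have h2 := (summable_prod_of_nonneg (fun p : ι × ι' => sq_nonneg _)).mp hprod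
  refine h2.2.congr fun i => ?_
  exact (parseval_norm_sq f (R (T (e i)))).tsum_eq


/-- Let `H, F` be Hilbert spaces with `H` infinite dimensional, `A ∈ L(H,F)`,
`b ∈ F`, `W ∈ L(F)` positive with square root `R = W^{1/2}` Hilbert–Schmidt.  If `A` is not
injective and `b ∉ range A + ker W`, then the weighted total least squares problem
`min_{X,x} ‖A−X‖²_{2,W} + ‖Xx−b‖²_W` has no solution (no global minimizer exists). -/
theorem stmt3_WTLS_no_solution_A_not_injective
    {H F ι ι' : Type*} [NormedAddCommGroup H] [InnerProductSpace ℝ H] [CompleteSpace H]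
    [NormedAddCommGroup F] [InnerProductSpace ℝ F] [CompleteSpace F]
    (hdim : ¬ FiniteDimensional ℝ H)
    (A : H →L[ℝ] F) (b : F) (W R : F →L[ℝ] F)
    (hR : R.IsPositive) (hRW : R.comp R = W)
    (f : HilbertBasis ι' ℝ F) (hHS : Summable fun i => ‖R (f i)‖ ^ 2)
    (e : HilbertBasis ι ℝ H)
    (hA : ¬ Function.Injective A)
    (hb : b ∉ LinearMap.range (A : H →ₗ[ℝ] F) + LinearMap.ker (W : F →ₗ[ℝ] F)) :
    ¬ ∃ (X₀ : H →L[ℝ] F) (x₀ : H), ∀ (X : H →L[ℝ] F) (x : H),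
        (∑' i, ‖(R.comp (A - X₀)) (e i)‖ ^ 2) + ‖R (X₀ x₀ - b)‖ ^ 2 ≤
          (∑' i, ‖(R.comp (A - X)) (e i)‖ ^ 2) + ‖R (X x - b)‖ ^ 2 := by
  rintro ⟨X₀, x₀, hmin⟩
  -- a nonzero kernel element of A
  obtain ⟨u, w, huw, hne⟩ := Function.not_injective_iff.mp hA
  set v : H := u - w with hv
  have hv0 : v ≠ 0 := sub_ne_zero.mpr hne
  have hAv : A v = 0 := by rw [hv, map_sub, huw, sub_self]
  have hnv : (0:ℝ) < ‖v‖ ^ 2 := pow_pos (norm_pos_iff.mpr hv0) 2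
  set m : ℝ := (∑' i, ‖(R.comp (A - X₀)) (e i)‖ ^ 2) + ‖R (X₀ x₀ - b)‖ ^ 2 with hm
  set D : ℝ := ‖R b‖ ^ 2 / ‖v‖ ^ 2 with hD
  -- m ≤ D / t² for every t > 0
  have hbound : ∀ t : ℝ, 0 < t → m ≤ D / t ^ 2 := by
    intro t ht
    set c : ℝ := (t * ‖v‖ ^ 2)⁻¹ with hc
    have htv : t * ‖v‖ ^ 2 ≠ 0 := mul_ne_zero (ne_of_gt ht) (ne_of_gt hnv)
    set X : H →L[ℝ] F := A + c • ((innerSL ℝ v).smulRight b) with hX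
    set x : H := t • v with hx
    have hXx : X x = b := by
      rw [hX, hx]
      simp only [ContinuousLinearMap.add_apply, ContinuousLinearMap.smul_apply,
        ContinuousLinearMap.smulRight_apply, innerSL_apply_apply, map_smul, hAv, smul_zero,
        inner_smul_right, real_inner_self_eq_norm_sq, zero_add, smul_smul]
      have hone : t * ((t * ‖v‖ ^ 2)⁻¹ * ‖v‖ ^ 2) = 1 := by
        field_simp
      rw [hone, one_smul]
    have hterm : ∀ i, ‖(R.comp (A - X)) (e i)‖ ^ 2
        = (c ^ 2 * ‖R b‖ ^ 2) * (⟪v, e i⟫ ^ 2) := by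
      intro i
      have : (A - X) (e i) = -(c * ⟪v, e i⟫) • b := by
        rw [hX]
        simp only [ContinuousLinearMap.sub_apply, ContinuousLinearMap.add_apply,
          ContinuousLinearMap.smul_apply, ContinuousLinearMap.smulRight_apply, innerSL_apply_apply]
        rw [neg_smul, mul_smul]
        abel
      rw [ContinuousLinearMap.comp_apply, this, map_smul, norm_smul]
      simp only [norm_neg, norm_mul, Real.norm_eq_abs]
      rw [mul_pow, mul_pow, sq_abs, sq_abs]
      ring
    have htsum : (∑' i, ‖(R.comp (A - X)) (e i)‖ ^ 2)
        = (c ^ 2 * ‖R b‖ ^ 2) * ‖v‖ ^ 2 := by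
      rw [tsum_congr hterm]
      exact ((parseval_norm_sq e v).mul_left _).tsum_eq
    have h := hmin X x
    rw [htsum, hXx, sub_self, map_zero, norm_zero] at h
    have heq : (c ^ 2 * ‖R b‖ ^ 2) * ‖v‖ ^ 2 + 0 ^ 2 = D / t ^ 2 := by
      rw [hc, hD]
      field_simp
      ring
    rw [heq] at h
    exact h
  -- hence m ≤ 0
  have hm0 : m ≤ 0 := by
    by_contra hpos
    push_neg at hpos
    set t : ℝ := max 1 (D / m + 1) with ht
    have ht1 : (1:ℝ) ≤ t := le_max_left _ _
    have htpos : (0:ℝ) < t := lt_of_lt_of_le one_pos ht1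
    have hbd := hbound t htpos
    have hDm : D / m + 1 ≤ t := le_max_right _ _
    have hDt : D + m ≤ t * m := by
      have h := mul_le_mul_of_nonneg_right hDm hpos.le
      rwa [add_mul, div_mul_cancel₀ _ (ne_of_gt hpos), one_mul] at h
    have ht2 : t ≤ t ^ 2 := by nlinarith
    have hlt : D < m * t ^ 2 := by nlinarith
    have hle : m * t ^ 2 ≤ D := (le_div_iff₀ (by positivity)).mp hbd
    linarith
  have hnonneg1 : 0 ≤ (∑' i, ‖(R.comp (A - X₀)) (e i)‖ ^ 2) :=
    tsum_nonneg fun i => sq_nonneg _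
  have hnonneg2 : 0 ≤ ‖R (X₀ x₀ - b)‖ ^ 2 := sq_nonneg _
  have h1 : (∑' i, ‖(R.comp (A - X₀)) (e i)‖ ^ 2) = 0 := by
    rw [hm] at hm0; linarith
  have h2 : ‖R (X₀ x₀ - b)‖ ^ 2 = 0 := by rw [hm] at hm0; linarith
  -- from h1 and summability, each term vanishes
  have hsummable : Summable fun i => ‖(R.comp (A - X₀)) (e i)‖ ^ 2 :=
    hs_comp_summable e f R hR.isSelfAdjoint hHS (A - X₀)
  have hterm0 : ∀ i, (R.comp (A - X₀)) (e i) = 0 := by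
    intro i
    have hle := Summable.le_tsum hsummable i (fun j _ => sq_nonneg _)
    have h0 : ‖(R.comp (A - X₀)) (e i)‖ ^ 2 = 0 := le_antisymm (h1 ▸ hle) (sq_nonneg _)
    have := pow_eq_zero_iff (n := 2) (by norm_num) |>.mp h0
    exact norm_eq_zero.mp this
  -- so R ∘ (A - X₀) = 0
  have hS : R.comp (A - X₀) = 0 := by
    have hdense : Dense (Submodule.span ℝ (Set.range e) : Set H) :=
      Submodule.dense_iff_topologicalClosure_eq_top.mpr e.dense_span
    refine ContinuousLinearMap.ext_on hdense ?_
    rintro _ ⟨i, rfl⟩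
    simpa using hterm0 i
  have hRAx : R ((A - X₀) x₀) = 0 := by
    have := congrArg (fun S : H →L[ℝ] F => S x₀) hS
    simpa using this
  have hRXb : R (X₀ x₀ - b) = 0 := by
    have := pow_eq_zero_iff (n := 2) (by norm_num) |>.mp h2
    exact norm_eq_zero.mp this
  -- b ∈ range A + ker W
  apply hb
  have hk : W (b - A x₀) = 0 := by
    have hcalc : b - A x₀ = -((X₀ x₀ - b) + (A - X₀) x₀) := by
      simp only [ContinuousLinearMap.sub_apply]
      abel
    have hr : R (b - A x₀) = 0 := by
      rw [hcalc, map_neg, map_add, hRAx, hRXb]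
      simp
    rw [← hRW]
    simp only [ContinuousLinearMap.comp_apply, hr, map_zero]
  rw [Submodule.add_eq_sup, Submodule.mem_sup]
  exact ⟨A x₀, LinearMap.mem_range.mpr ⟨x₀, rfl⟩, b - A x₀, hk, by abel⟩
end

section
/- Let H, F, E be Hilbert spaces, A ∈ L(H,F), T ∈ L(H,E), b ∈ F, W ∈ L(F)⁺ with W^{1/2} ∈ S₂. If the operator T*T + A*WA is not bounded below, then either there exists x ∈ ker(T) with W^{1/2}Ax = W^{1/2}b (the trivial case), or the regularized weighted total least squares problem min over (X,x) of ‖Tx‖² + ‖A−X‖²_{2,W} + ‖Xx−b‖²_W has no solution (the infimum is not attained). -/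
open ContinuousLinearMap
open scoped RealInnerProductSpace

lemma parseval_sq' {F : Type*} [NormedAddCommGroup F] [InnerProductSpace ℝ F]
    {ι' : Type*} (f : HilbertBasis ι' ℝ F) (w : F) :
    HasSum (fun j => ⟪f j, w⟫ ^ 2) (‖w‖ ^ 2) := by
  have h := f.hasSum_inner_mul_inner w w
  rw [real_inner_self_eq_norm_sq] at h
  rw [show (fun j => ⟪f j, w⟫ ^ 2) = fun j => ⟪w, f j⟫ * ⟪f j, w⟫ by
    funext j; rw [sq, real_inner_comm]]
  exact h

lemma hs_comp' {H F : Type*} [NormedAddCommGroup H] [InnerProductSpace ℝ H] [CompleteSpace H]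
    [NormedAddCommGroup F] [InnerProductSpace ℝ F] [CompleteSpace F]
    {ι ι' : Type*} (R : F →L[ℝ] F) (hR : IsSelfAdjoint R)
    (f : HilbertBasis ι' ℝ F) (hHS : Summable fun i => ‖R (f i)‖ ^ 2)
    (B : H →L[ℝ] F) (e : HilbertBasis ι ℝ H) :
    Summable fun i => ‖(R.comp B) (e i)‖ ^ 2 := by
  set C := R.comp B with hC
  have hadjC : adjoint C = (adjoint B).comp R := by
    rw [hC, adjoint_comp, hR.adjoint_eq]
  have hadj : ∀ j, ‖adjoint C (f j)‖ ^ 2 ≤ ‖adjoint B‖ ^ 2 * ‖R (f j)‖ ^ 2 := by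
    intro j
    rw [hadjC]
    calc ‖(adjoint B).comp R (f j)‖ ^ 2 ≤ (‖adjoint B‖ * ‖R (f j)‖) ^ 2 := by
          apply pow_le_pow_left₀ (norm_nonneg _)
          simpa using (adjoint B).le_opNorm (R (f j))
      _ = ‖adjoint B‖ ^ 2 * ‖R (f j)‖ ^ 2 := by ring
  have hsum1 : Summable fun j => ‖adjoint C (f j)‖ ^ 2 :=
    Summable.of_nonneg_of_le (fun j => sq_nonneg _) hadj (hHS.mul_left _)
  set g : ι' × ι → ℝ := fun p => ⟪e p.2, adjoint C (f p.1)⟫ ^ 2 with hg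
  have hgj : ∀ j, HasSum (fun i => g (j, i)) (‖adjoint C (f j)‖ ^ 2) := fun j =>
    parseval_sq' e (adjoint C (f j))
  have hgsum : Summable g := by
    refine (summable_prod_of_nonneg (fun p => sq_nonneg _)).mpr ⟨fun j => (hgj j).summable, ?_⟩
    convert hsum1 using 1
    exact funext fun j => (hgj j).tsum_eq
  have hswap : Summable (g ∘ ⇑(Equiv.prodComm ι ι')) := (Equiv.prodComm ι ι').summable_iff.mpr hgsum
  have h2 := ((summable_prod_of_nonneg (f := g ∘ ⇑(Equiv.prodComm ι ι'))
      (fun p => sq_nonneg _)).mp hswap).2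
  convert h2 using 1
  funext i
  have hps : HasSum (fun j => g (j, i)) (‖C (e i)‖ ^ 2) := by
    have := parseval_sq' f (C (e i))
    convert this using 2 with j
    rw [hg]
    simp only
    rw [← adjoint_inner_left C, real_inner_comm]
  exact (hps.tsum_eq).symm

set_option maxHeartbeats 1000000 in
/-- Hilbert spaces `H, F, E`, `A ∈ L(H,F)`, `T ∈ L(H,E)`, `b ∈ F`, `W ∈ L(F)`
positive with square root `R = W^{1/2}` Hilbert–Schmidt.  If `T*T + A*WA` is not bounded
below, then either there exists `x ∈ ker T` with `W^{1/2}Ax = W^{1/2}b` (trivial case), or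
the regularized weighted total least squares problem has no solution (no minimizer). -/
theorem stmt5_RWTLS_no_solution
    {H F E ι ι' : Type*} [NormedAddCommGroup H] [InnerProductSpace ℝ H] [CompleteSpace H]
    [NormedAddCommGroup F] [InnerProductSpace ℝ F] [CompleteSpace F]
    [NormedAddCommGroup E] [InnerProductSpace ℝ E] [CompleteSpace E]
    (A : H →L[ℝ] F) (T : H →L[ℝ] E) (b : F) (W R : F →L[ℝ] F)
    (hR : R.IsPositive) (hRW : R.comp R = W)
    (f : HilbertBasis ι' ℝ F) (hHS : Summable fun i => ‖R (f i)‖ ^ 2)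
    (e : HilbertBasis ι ℝ H)
    (hnb : ¬ ∃ c : ℝ, 0 < c ∧ ∀ x : H,
        c * ‖x‖ ≤ ‖((adjoint T).comp T + (adjoint A).comp (W.comp A)) x‖) :
    (∃ x : H, T x = 0 ∧ R (A x) = R b) ∨
    ¬ ∃ (X₀ : H →L[ℝ] F) (x₀ : H), ∀ (X : H →L[ℝ] F) (x : H),
        ‖T x₀‖ ^ 2 + (∑' i, ‖(R.comp (A - X₀)) (e i)‖ ^ 2) + ‖R (X₀ x₀ - b)‖ ^ 2 ≤
          ‖T x‖ ^ 2 + (∑' i, ‖(R.comp (A - X)) (e i)‖ ^ 2) + ‖R (X x - b)‖ ^ 2 := by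
  by_cases hmin : ∃ (X₀ : H →L[ℝ] F) (x₀ : H), ∀ (X : H →L[ℝ] F) (x : H),
      ‖T x₀‖ ^ 2 + (∑' i, ‖(R.comp (A - X₀)) (e i)‖ ^ 2) + ‖R (X₀ x₀ - b)‖ ^ 2 ≤
        ‖T x‖ ^ 2 + (∑' i, ‖(R.comp (A - X)) (e i)‖ ^ 2) + ‖R (X x - b)‖ ^ 2
  swap
  · exact Or.inr hmin
  obtain ⟨X₀, x₀, hm⟩ := hmin
  left
  set S := (adjoint T).comp T + (adjoint A).comp (W.comp A) with hS
  -- inner product identity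
  have hSx : ∀ x : H, ⟪S x, x⟫ = ‖T x‖ ^ 2 + ‖R (A x)‖ ^ 2 := by
    intro x
    rw [hS]
    simp only [add_apply, comp_apply, inner_add_left]
    rw [adjoint_inner_left, real_inner_self_eq_norm_sq, adjoint_inner_left]
    congr 1
    rw [← hRW]
    simp only [comp_apply]
    nth_rewrite 1 [← hR.isSelfAdjoint.adjoint_eq]
    rw [adjoint_inner_left, real_inner_self_eq_norm_sq]
  -- step 1: almost-null unit vectors
  have step1 : ∀ c : ℝ, 0 < c → ∃ u : H, ‖u‖ = 1 ∧ ‖T u‖ ^ 2 + ‖R (A u)‖ ^ 2 < c := by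
    intro c hc
    push_neg at hnb
    obtain ⟨x, hx⟩ := hnb c hc
    have hx0 : x ≠ 0 := by
      rintro rfl
      simp at hx
    have hnx : (0:ℝ) < ‖x‖ := norm_pos_iff.mpr hx0
    refine ⟨‖x‖⁻¹ • x, ?_, ?_⟩
    · rw [norm_smul, norm_inv, norm_norm, inv_mul_cancel₀ hnx.ne']
    · have hu1 : ‖‖x‖⁻¹ • x‖ = 1 := by
        rw [norm_smul, norm_inv, norm_norm, inv_mul_cancel₀ hnx.ne']
      calc ‖T (‖x‖⁻¹ • x)‖ ^ 2 + ‖R (A (‖x‖⁻¹ • x))‖ ^ 2 = ⟪S (‖x‖⁻¹ • x), ‖x‖⁻¹ • x⟫ :=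
            (hSx _).symm
        _ ≤ ‖S (‖x‖⁻¹ • x)‖ * ‖‖x‖⁻¹ • x‖ := real_inner_le_norm _ _
        _ = ‖x‖⁻¹ * ‖S x‖ := by rw [hu1, mul_one, map_smul, norm_smul, norm_inv, norm_norm]
        _ < ‖x‖⁻¹ * (c * ‖x‖) := by
            exact mul_lt_mul_of_pos_left hx (inv_pos.mpr hnx)
        _ = c := by field_simp
  set K : ℝ := 1 + (‖R b‖ + 1) ^ 2 with hK
  have hK0 : 0 < K := by positivity
  set v : ℝ := ‖T x₀‖ ^ 2 + (∑' i, ‖(R.comp (A - X₀)) (e i)‖ ^ 2) + ‖R (X₀ x₀ - b)‖ ^ 2 with hv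
  -- key claim
  have claim : ∀ c : ℝ, 0 < c → c ≤ 1 → v ≤ c * K := by
    intro c hc hc1
    obtain ⟨u, hu1, hu2⟩ := step1 (c ^ 4) (by positivity)
    have hTu : ‖T u‖ ≤ c ^ 2 := by
      rw [← pow_le_pow_iff_left₀ (norm_nonneg _) (by positivity) (two_ne_zero)]
      nlinarith [sq_nonneg ‖R (A u)‖]
    have hRAu : ‖R (A u)‖ ≤ c ^ 2 := by
      rw [← pow_le_pow_iff_left₀ (norm_nonneg _) (by positivity) (two_ne_zero)]
      nlinarith [sq_nonneg ‖T u‖]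
    set vv : F := b - c⁻¹ • A u with hvv
    set X : H →L[ℝ] F := A + (innerSL ℝ (c • u)).smulRight vv with hX
    set xx : H := c⁻¹ • u with hxx
    have hAX : A - X = -((innerSL ℝ (c • u)).smulRight vv) := by
      rw [hX]; abel
    have happ : ∀ y : H, (R.comp (A - X)) y = -(⟪y, c • u⟫ • R vv) := by
      intro y
      rw [hAX]
      simp only [comp_apply, neg_apply, smulRight_apply, innerSL_apply_apply, map_smul, map_neg]
      simp [ContinuousLinearMap.smul_apply, real_inner_smul_right, real_inner_comm u y]
    -- the tsum
    have hts : HasSum (fun i => ‖(R.comp (A - X)) (e i)‖ ^ 2) (c ^ 2 * ‖R vv‖ ^ 2) := by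
      have h1 : HasSum (fun i => ⟪e i, c • u⟫ ^ 2 * ‖R vv‖ ^ 2)
          (‖c • u‖ ^ 2 * ‖R vv‖ ^ 2) := (parseval_sq' e (c • u)).mul_right _
      have hcu : ‖c • u‖ ^ 2 = c ^ 2 := by
        rw [norm_smul, hu1, mul_one, Real.norm_eq_abs, sq_abs]
      rw [← hcu]
      convert h1 using 2 with i
      rw [happ, norm_neg, norm_smul, mul_pow, Real.norm_eq_abs, sq_abs]
    have hXxx : X xx = b := by
      rw [hX]
      simp only [add_apply, smulRight_apply, innerSL_apply_apply]
      have : ⟪c • u, xx⟫ = 1 := by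
        rw [hxx, real_inner_smul_left, real_inner_smul_right, real_inner_self_eq_norm_sq, hu1]
        field_simp
      rw [this, one_smul, hvv, hxx, map_smul]
      abel
    have hTxx : ‖T xx‖ ^ 2 ≤ c ^ 2 := by
      have : ‖T xx‖ ≤ c := by
        rw [hxx, map_smul, norm_smul, norm_inv, Real.norm_eq_abs, abs_of_pos hc]
        calc c⁻¹ * ‖T u‖ ≤ c⁻¹ * c ^ 2 :=
              mul_le_mul_of_nonneg_left hTu (by positivity)
          _ = c := by field_simp [sq]
      exact pow_le_pow_left₀ (norm_nonneg _) this 2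
    have hRvv : ‖R vv‖ ≤ ‖R b‖ + 1 := by
      rw [hvv]
      calc ‖R (b - c⁻¹ • A u)‖ = ‖R b - c⁻¹ • R (A u)‖ := by rw [map_sub, map_smul]
        _ ≤ ‖R b‖ + ‖c⁻¹ • R (A u)‖ := norm_sub_le _ _
        _ ≤ ‖R b‖ + 1 := by
            apply add_le_add_right
            rw [norm_smul, norm_inv, Real.norm_eq_abs, abs_of_pos hc]
            calc c⁻¹ * ‖R (A u)‖ ≤ c⁻¹ * c ^ 2 :=
                  mul_le_mul_of_nonneg_left hRAu (by positivity)
              _ = c := by field_simp [sq]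
              _ ≤ 1 := hc1
    have hterm2 : (∑' i, ‖(R.comp (A - X)) (e i)‖ ^ 2) ≤ c ^ 2 * (‖R b‖ + 1) ^ 2 := by
      rw [hts.tsum_eq]
      apply mul_le_mul_of_nonneg_left _ (by positivity)
      exact pow_le_pow_left₀ (norm_nonneg _) hRvv 2
    have := hm X xx
    rw [hXxx, sub_self, map_zero, norm_zero] at this
    have hcc : c ^ 2 ≤ c := by nlinarith
    calc v ≤ ‖T xx‖ ^ 2 + (∑' i, ‖(R.comp (A - X)) (e i)‖ ^ 2) + 0 ^ 2 := this
      _ ≤ c ^ 2 + c ^ 2 * (‖R b‖ + 1) ^ 2 + 0 := by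
          have := hterm2; nlinarith [hTxx]
      _ = c ^ 2 * K := by rw [hK]; ring
      _ ≤ c * K := mul_le_mul_of_nonneg_right hcc hK0.le
  -- v ≤ 0
  have hv0 : v ≤ 0 := by
    apply le_of_forall_pos_le_add
    intro ε hε
    rw [zero_add]
    have hc : 0 < min 1 (ε / K) := lt_min one_pos (by positivity)
    calc v ≤ min 1 (ε / K) * K := claim _ hc (min_le_left _ _)
      _ ≤ (ε / K) * K := mul_le_mul_of_nonneg_right (min_le_right _ _) hK0.le
      _ = ε := div_mul_cancel₀ _ hK0.ne'
  -- nonnegativity of terms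
  have ht2sum : Summable fun i => ‖(R.comp (A - X₀)) (e i)‖ ^ 2 :=
    hs_comp' R hR.isSelfAdjoint f hHS (A - X₀) e
  have ht2 : (0:ℝ) ≤ ∑' i, ‖(R.comp (A - X₀)) (e i)‖ ^ 2 :=
    tsum_nonneg fun i => sq_nonneg _
  have ht1 : T x₀ = 0 := by
    have : ‖T x₀‖ ^ 2 ≤ 0 := by
      have := sq_nonneg ‖R (X₀ x₀ - b)‖
      rw [hv] at hv0; linarith
    have : ‖T x₀‖ = 0 := by nlinarith [norm_nonneg (T x₀)]
    exact norm_eq_zero.mp this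
  have ht3 : R (X₀ x₀) = R b := by
    have h3 : ‖R (X₀ x₀ - b)‖ ^ 2 ≤ 0 := by
      have := sq_nonneg ‖T x₀‖
      rw [hv] at hv0; linarith
    have : ‖R (X₀ x₀ - b)‖ = 0 := by nlinarith [norm_nonneg (R (X₀ x₀ - b))]
    have h0 : R (X₀ x₀ - b) = 0 := norm_eq_zero.mp this
    rw [map_sub, sub_eq_zero] at h0
    exact h0
  have ht2z : ∑' i, ‖(R.comp (A - X₀)) (e i)‖ ^ 2 = 0 := by
    have h3 := sq_nonneg ‖R (X₀ x₀ - b)‖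
    have h1 := sq_nonneg ‖T x₀‖
    rw [hv] at hv0; linarith
  have hzero : ∀ i, (R.comp (A - X₀)) (e i) = 0 := by
    intro i
    have hle := Summable.le_tsum ht2sum i (fun j _ => sq_nonneg _)
    rw [ht2z] at hle
    have : ‖(R.comp (A - X₀)) (e i)‖ ^ 2 = 0 := le_antisymm hle (sq_nonneg _)
    have : ‖(R.comp (A - X₀)) (e i)‖ = 0 := by nlinarith [norm_nonneg ((R.comp (A - X₀)) (e i))]
    exact norm_eq_zero.mp this
  have hdense : Dense (Submodule.span ℝ (Set.range ⇑e) : Set H) :=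
    Submodule.dense_iff_topologicalClosure_eq_top.mpr e.dense_span
  have hop : R.comp (A - X₀) = 0 := by
    refine ContinuousLinearMap.ext_on hdense ?_
    rintro _ ⟨i, rfl⟩
    simpa using hzero i
  have hRA : R (A x₀) = R (X₀ x₀) := by
    have h : (R.comp (A - X₀)) x₀ = 0 := by rw [hop]; simp
    rw [comp_apply, sub_apply, map_sub, sub_eq_zero] at h
    exact h
  exact ⟨x₀, ht1, hRA.trans ht3⟩
end

section
/- Let H, F, E be Hilbert spaces, A ∈ L(H,F), T ∈ L(H,E), b ∈ F, W ∈ L(F)⁺ with W^{1/2} ∈ S₂, and fix x ∈ H. Then A_x := A + (⟨·,x⟩/(1+‖x‖²))(b − Ax) minimizes F_x(X) := ‖Tx‖² + ‖A−X‖²_{2,W} + ‖Xx−b‖²_W over X ∈ L(H,F), and the minimum value equals G(x) := ‖Ax−b‖²_W/(1+‖x‖²) + ‖Tx‖². -/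
open ContinuousLinearMap
set_option maxHeartbeats 1000000
set_option maxHeartbeats 1000000

open ContinuousLinearMap
open scoped RealInnerProductSpace

section Aux

variable {H F : Type*} [NormedAddCommGroup H] [InnerProductSpace ℝ H] [CompleteSpace H]
  [NormedAddCommGroup F] [InnerProductSpace ℝ F] [CompleteSpace F]

lemma aux_parseval {ι : Type*} (e : HilbertBasis ι ℝ H) (v : H) :
    HasSum (fun i => ⟪e i, v⟫ ^ 2) (‖v‖ ^ 2) := by
  have h := e.hasSum_inner_mul_inner v v
  rw [real_inner_self_eq_norm_sq] at h
  have hf : (fun i => ⟪e i, v⟫ ^ 2) = fun i => ⟪v, e i⟫ * ⟪e i, v⟫ := by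
    funext i; rw [sq, real_inner_comm (e i) v]
  rw [hf]; exact h

lemma aux_parseval_tsum {ι : Type*} (e : HilbertBasis ι ℝ H) (v : H) :
    ∑' i, ⟪e i, v⟫ ^ 2 = ‖v‖ ^ 2 := (aux_parseval e v).tsum_eq

lemma aux_hs_summable {ι ι' : Type*} (R : F →L[ℝ] F) (hA : adjoint R = R)
    (f : HilbertBasis ι' ℝ F) (hHS : Summable fun j => ‖R (f j)‖ ^ 2)
    (e : HilbertBasis ι ℝ H) (B : H →L[ℝ] F) :
    Summable fun i => ‖R (B (e i))‖ ^ 2 := by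
  set z : ι' → H := fun j => adjoint B (R (f j)) with hz
  have key : ∀ j i, ⟪f j, R (B (e i))⟫ = ⟪e i, z j⟫ := by
    intro j i
    calc ⟪f j, R (B (e i))⟫ = ⟪adjoint R (f j), B (e i)⟫ :=
          (adjoint_inner_left R (B (e i)) (f j)).symm
      _ = ⟪R (f j), B (e i)⟫ := by rw [hA]
      _ = ⟪adjoint B (R (f j)), e i⟫ := (adjoint_inner_left B (e i) (R (f j))).symm
      _ = ⟪e i, z j⟫ := real_inner_comm _ _
  have hnn : (0 : (ι' × ι) → ℝ) ≤ fun p => ⟪f p.1, R (B (e p.2))⟫ ^ 2 :=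
    fun p => sq_nonneg _
  have hg : Summable fun p : ι' × ι => ⟪f p.1, R (B (e p.2))⟫ ^ 2 := by
    rw [summable_prod_of_nonneg hnn]
    constructor
    · intro j
      simp only [key]
      exact (aux_parseval e (z j)).summable
    · have : (fun j => ∑' i, ⟪f j, R (B (e i))⟫ ^ 2) = fun j => ‖z j‖ ^ 2 := by
        funext j
        simp only [key]
        exact aux_parseval_tsum e (z j)
      rw [this]
      refine Summable.of_nonneg_of_le (fun j => sq_nonneg _) (fun j => ?_)
        (hHS.mul_left (‖adjoint B‖ ^ 2))
      have h1 := (adjoint B).le_opNorm (R (f j))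
      have h2 : (0:ℝ) ≤ ‖adjoint B‖ * ‖R (f j)‖ :=
        mul_nonneg (norm_nonneg _) (norm_nonneg _)
      nlinarith [norm_nonneg (z j)]
  have hswap : Summable fun p : ι × ι' => ⟪f p.2, R (B (e p.1))⟫ ^ 2 := hg.prod_symm
  have h2 := ((summable_prod_of_nonneg (fun p => sq_nonneg _)).1 hswap).2
  have : (fun i => ∑' j, ⟪f j, R (B (e i))⟫ ^ 2) = fun i => ‖R (B (e i))‖ ^ 2 := by
    funext i; exact aux_parseval_tsum f (R (B (e i)))
  rwa [this] at h2

end Aux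

section Key

variable {H F : Type*} [NormedAddCommGroup H] [InnerProductSpace ℝ H] [CompleteSpace H]
  [NormedAddCommGroup F] [InnerProductSpace ℝ F] [CompleteSpace F]

lemma aux_key {ι ι' : Type*} (A : H →L[ℝ] F) (b : F) (x : H) (R : F →L[ℝ] F)
    (hA : ContinuousLinearMap.adjoint R = R)
    (f : HilbertBasis ι' ℝ F) (hHS : Summable fun j => ‖R (f j)‖ ^ 2)
    (e : HilbertBasis ι ℝ H) (X : H →L[ℝ] F) :
    (∑' i, ‖(R.comp (A - X)) (e i)‖ ^ 2) + ‖R (X x - b)‖ ^ 2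
      = ‖R (A x - b)‖ ^ 2 / (1 + ‖x‖ ^ 2)
        + ((∑' i, ‖R ((X - (A + (1 / (1 + ‖x‖ ^ 2)) •
              (innerSL ℝ x).smulRight (b - A x))) (e i))‖ ^ 2)
           + ‖R ((X - (A + (1 / (1 + ‖x‖ ^ 2)) •
              (innerSL ℝ x).smulRight (b - A x))) x)‖ ^ 2) := by
  have hden : (0:ℝ) < 1 + ‖x‖ ^ 2 := by positivity
  set c : ℝ := 1 / (1 + ‖x‖ ^ 2) with hcdef
  have hc : c * (1 + ‖x‖ ^ 2) = 1 := by
    rw [hcdef]; field_simp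
  set w : F := b - A x with hwdef
  set Ax : H →L[ℝ] F := A + c • (innerSL ℝ x).smulRight w with hAxdef
  set B : H →L[ℝ] F := X - Ax with hBdef
  set z : H := ContinuousLinearMap.adjoint B (R (R w)) with hzdef
  have hRw : ∀ v : F, ⟪R w, R v⟫ = ⟪R (R w), v⟫ := by
    intro v
    calc ⟪R w, R v⟫ = ⟪ContinuousLinearMap.adjoint R (R w), v⟫ := by
          rw [ContinuousLinearMap.adjoint_inner_left R v (R w)]
      _ = ⟪R (R w), v⟫ := by rw [hA]
  have hpt : ∀ i, ‖(R.comp (A - X)) (e i)‖ ^ 2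
      = (c ^ 2 * ‖R w‖ ^ 2) * ⟪e i, x⟫ ^ 2
        + (2 * c) * (⟪x, e i⟫ * ⟪e i, z⟫) + ‖R (B (e i))‖ ^ 2 := by
    intro i
    have h1 : (A - X) (e i) = -((c * ⟪x, e i⟫) • w + B (e i)) := by
      simp only [hBdef, hAxdef, ContinuousLinearMap.sub_apply,
        ContinuousLinearMap.add_apply, ContinuousLinearMap.smul_apply,
        ContinuousLinearMap.smulRight_apply, innerSL_apply_apply, smul_smul]
      abel
    have h2 : ⟪R w, R (B (e i))⟫ = ⟪e i, z⟫ := by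
      rw [hRw, hzdef]
      rw [← ContinuousLinearMap.adjoint_inner_left B (e i) (R (R w))]
      exact real_inner_comm _ _
    rw [ContinuousLinearMap.comp_apply, h1, map_neg, norm_neg, map_add, map_smul,
      norm_add_sq_real, real_inner_smul_left, h2, norm_smul]
    rw [real_inner_comm x (e i)]
    simp only [Real.norm_eq_abs, mul_pow, sq_abs]
    rw [real_inner_comm (e i) x]
    ring
  have hs1 : Summable fun i => (c ^ 2 * ‖R w‖ ^ 2) * ⟪e i, x⟫ ^ 2 :=
    (aux_parseval e x).summable.mul_left _
  have hs2 : Summable fun i => (2 * c) * (⟪x, e i⟫ * ⟪e i, z⟫) :=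
    (e.summable_inner_mul_inner x z).mul_left _
  have hs3 : Summable fun i => ‖R (B (e i))‖ ^ 2 := aux_hs_summable R hA f hHS e B
  have htsum : ∑' i, ‖(R.comp (A - X)) (e i)‖ ^ 2
      = (c ^ 2 * ‖R w‖ ^ 2) * ‖x‖ ^ 2 + (2 * c) * ⟪x, z⟫
        + ∑' i, ‖R (B (e i))‖ ^ 2 := by
    rw [tsum_congr hpt, Summable.tsum_add (hs1.add hs2) hs3, Summable.tsum_add hs1 hs2,
      tsum_mul_left, tsum_mul_left, aux_parseval_tsum e x,
      e.tsum_inner_mul_inner x z]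
  have hxz : ⟪x, z⟫ = ⟪R (B x), R w⟫ := by
    rw [hzdef, ContinuousLinearMap.adjoint_inner_right B x (R (R w))]
    calc ⟪B x, R (R w)⟫ = ⟪R (R w), B x⟫ := real_inner_comm _ _
      _ = ⟪R w, R (B x)⟫ := (hRw (B x)).symm
      _ = ⟪R (B x), R w⟫ := real_inner_comm _ _
  have hcs : c * ‖x‖ ^ 2 = 1 - c := by nlinarith
  have hAxx : Ax x - b = -(c • w) := by
    rw [hAxdef]
    simp only [ContinuousLinearMap.add_apply, ContinuousLinearMap.smul_apply,
      ContinuousLinearMap.smulRight_apply, innerSL_apply_apply,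
      real_inner_self_eq_norm_sq, smul_smul, hcs, hwdef]
    module
  have hXx : X x - b = B x - c • w := by
    have h : X x - b = B x + (Ax x - b) := by
      rw [hBdef]; simp only [ContinuousLinearMap.sub_apply]; abel
    rw [h, hAxx]; abel
  have hnorm2 : ‖R (X x - b)‖ ^ 2
      = ‖R (B x)‖ ^ 2 - (2 * c) * ⟪R (B x), R w⟫ + c ^ 2 * ‖R w‖ ^ 2 := by
    rw [hXx, map_sub, map_smul, norm_sub_sq_real, real_inner_smul_right, norm_smul]
    simp only [Real.norm_eq_abs, mul_pow, sq_abs]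
    ring
  have hno : ‖R w‖ = ‖R (A x - b)‖ := by
    rw [show R w = -(R (A x - b)) by rw [← map_neg, neg_sub, hwdef]]
    exact norm_neg _
  have hc2 : c ^ 2 * (1 + ‖x‖ ^ 2) = c := by nlinarith
  have hG : ‖R (A x - b)‖ ^ 2 / (1 + ‖x‖ ^ 2) = c * ‖R (A x - b)‖ ^ 2 := by
    rw [hcdef]; ring
  rw [htsum, hxz, hnorm2, hno, hG]
  nlinarith [hc2, sq_nonneg (‖R (A x - b)‖)]

end Key

/-- Hilbert spaces `H, F, E`, `A ∈ L(H,F)`, `T ∈ L(H,E)`, `b ∈ F`, `W ∈ L(F)`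
positive with square root `R = W^{1/2}` Hilbert–Schmidt, and `x ∈ H` fixed.  Then
`A_x := A + (⟨·,x⟩/(1+‖x‖²))(b − Ax)` minimizes
`F_x(X) := ‖Tx‖² + ‖A−X‖²_{2,W} + ‖Xx−b‖²_W` over `X ∈ L(H,F)`, and the minimum value is
`G(x) := ‖Ax−b‖²_W/(1+‖x‖²) + ‖Tx‖²`. -/
theorem stmt10_partial_minimization
    {H F E ι ι' : Type*} [NormedAddCommGroup H] [InnerProductSpace ℝ H] [CompleteSpace H]
    [NormedAddCommGroup F] [InnerProductSpace ℝ F] [CompleteSpace F]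
    [NormedAddCommGroup E] [InnerProductSpace ℝ E] [CompleteSpace E]
    (A : H →L[ℝ] F) (T : H →L[ℝ] E) (b : F) (x : H) (W R : F →L[ℝ] F)
    (hR : R.IsPositive) (hRW : R.comp R = W)
    (f : HilbertBasis ι' ℝ F) (hHS : Summable fun i => ‖R (f i)‖ ^ 2)
    (e : HilbertBasis ι ℝ H) :
    (∀ X : H →L[ℝ] F,
        ‖T x‖ ^ 2 +
          (∑' i, ‖(R.comp (A - (A + (1 / (1 + ‖x‖ ^ 2)) •
            (innerSL ℝ x).smulRight (b - A x)))) (e i)‖ ^ 2) +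
          ‖R ((A + (1 / (1 + ‖x‖ ^ 2)) • (innerSL ℝ x).smulRight (b - A x)) x - b)‖ ^ 2 ≤
        ‖T x‖ ^ 2 + (∑' i, ‖(R.comp (A - X)) (e i)‖ ^ 2) + ‖R (X x - b)‖ ^ 2) ∧
    ‖T x‖ ^ 2 +
        (∑' i, ‖(R.comp (A - (A + (1 / (1 + ‖x‖ ^ 2)) •
          (innerSL ℝ x).smulRight (b - A x)))) (e i)‖ ^ 2) +
        ‖R ((A + (1 / (1 + ‖x‖ ^ 2)) • (innerSL ℝ x).smulRight (b - A x)) x - b)‖ ^ 2 =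
      ‖R (A x - b)‖ ^ 2 / (1 + ‖x‖ ^ 2) + ‖T x‖ ^ 2 := by
  have hA : ContinuousLinearMap.adjoint R = R :=
    ContinuousLinearMap.isSelfAdjoint_iff'.mp hR.isSelfAdjoint
  have key := fun X : H →L[ℝ] F => aux_key A b x R hA f hHS e X
  have k2 := key (A + (1 / (1 + ‖x‖ ^ 2)) • (innerSL ℝ x).smulRight (b - A x))
  rw [sub_self] at k2
  simp only [ContinuousLinearMap.zero_apply, map_zero, norm_zero, ne_eq,
    OfNat.ofNat_ne_zero, not_false_eq_true, zero_pow, tsum_zero, add_zero] at k2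
  constructor
  · intro X
    have k1 := key X
    have h1 : 0 ≤ ∑' i, ‖R ((X - (A + (1 / (1 + ‖x‖ ^ 2)) •
        (innerSL ℝ x).smulRight (b - A x))) (e i))‖ ^ 2 :=
      tsum_nonneg fun i => sq_nonneg _
    have h2 := sq_nonneg ‖R ((X - (A + (1 / (1 + ‖x‖ ^ 2)) •
        (innerSL ℝ x).smulRight (b - A x))) x)‖
    linarith
  · linarith
end

section
/- Let H, F, E be Hilbert spaces, A ∈ L(H,F), T ∈ L(H,E), b ∈ F, W ∈ L(F)⁺ with W^{1/2} ∈ S₂, and let G(x) = ‖Ax−b‖²_W/(1+‖x‖²) + ‖Tx‖². Then there exists A₀ such that (A₀, x₀) is a global minimizer of the regularized weighted total least squares objective over L(H,F) × H if and only if x₀ is a global minimizer of G; in that case A₀ = A + (⟨·,x₀⟩/(1+‖x₀‖²))(b − Ax₀). -/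
open ContinuousLinearMap


section Aux

variable {H F ι ι' : Type*} [NormedAddCommGroup H] [InnerProductSpace ℝ H] [CompleteSpace H]
  [NormedAddCommGroup F] [InnerProductSpace ℝ F] [CompleteSpace F]

lemma parseval_hasSum (e : HilbertBasis ι ℝ H) (x : H) :
    HasSum (fun i => (inner ℝ x (e i) : ℝ) ^ 2) (‖x‖ ^ 2) := by
  have h := e.hasSum_inner_mul_inner x x
  have hx : (inner ℝ x x : ℝ) = ‖x‖ ^ 2 := real_inner_self_eq_norm_sq x
  rw [hx] at h
  refine h.congr_fun fun i => ?_
  rw [sq, real_inner_comm (e i) x]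

lemma adjoint_norm_sq_le (e : HilbertBasis ι ℝ H) (C : H →L[ℝ] F)
    (hC : Summable fun i => ‖C (e i)‖ ^ 2) (y : F) :
    ‖(adjoint C) y‖ ^ 2 ≤ ‖y‖ ^ 2 * ∑' i, ‖C (e i)‖ ^ 2 := by
  have h1 := parseval_hasSum e (adjoint C y)
  rw [← h1.tsum_eq, ← tsum_mul_left]
  refine Summable.tsum_le_tsum (fun i => ?_) h1.summable (hC.mul_left _)
  have h2 : (inner ℝ (adjoint C y) (e i) : ℝ) = inner ℝ y (C (e i)) := adjoint_inner_left C (e i) y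
  have h3 := abs_real_inner_le_norm y (C (e i))
  rw [h2]
  calc (inner ℝ y (C (e i)) : ℝ) ^ 2 = |(inner ℝ y (C (e i)) : ℝ)| ^ 2 := (sq_abs _).symm
    _ ≤ (‖y‖ * ‖C (e i)‖) ^ 2 := by
        apply pow_le_pow_left₀ (abs_nonneg _) h3
    _ = ‖y‖ ^ 2 * ‖C (e i)‖ ^ 2 := by ring

lemma apply_norm_sq_le (e : HilbertBasis ι ℝ H) (C : H →L[ℝ] F)
    (hC : Summable fun i => ‖C (e i)‖ ^ 2) (x : H) :
    ‖C x‖ ^ 2 ≤ (∑' i, ‖C (e i)‖ ^ 2) * ‖x‖ ^ 2 := by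
  set σ := ∑' i, ‖C (e i)‖ ^ 2 with hσdef
  have hσ0 : 0 ≤ σ := tsum_nonneg fun i => sq_nonneg _
  rcases eq_or_lt_of_le (norm_nonneg (C x)) with h0 | h0
  · rw [← h0]; simpa using mul_nonneg hσ0 (sq_nonneg ‖x‖)
  have h1 : ‖C x‖ ^ 2 ≤ ‖x‖ * ‖adjoint C (C x)‖ := by
    have := real_inner_le_norm x (adjoint C (C x))
    rwa [adjoint_inner_right, real_inner_self_eq_norm_sq] at this
  have h2 : ‖adjoint C (C x)‖ ^ 2 ≤ ‖C x‖ ^ 2 * σ := adjoint_norm_sq_le e C hC (C x)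
  have h3 : ‖C x‖ ^ 2 * ‖C x‖ ^ 2 ≤ (‖x‖ * ‖adjoint C (C x)‖) * (‖x‖ * ‖adjoint C (C x)‖) :=
    mul_le_mul h1 h1 (sq_nonneg _) (mul_nonneg (norm_nonneg _) (norm_nonneg _))
  have h4 : ‖x‖ ^ 2 * ‖adjoint C (C x)‖ ^ 2 ≤ ‖x‖ ^ 2 * (‖C x‖ ^ 2 * σ) :=
    mul_le_mul_of_nonneg_left h2 (sq_nonneg _)
  nlinarith [h3, h4, mul_pos h0 h0]

lemma key_lower (e : HilbertBasis ι ℝ H) (C : H →L[ℝ] F)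
    (hC : Summable fun i => ‖C (e i)‖ ^ 2) (v : F) (x : H) :
    ‖v‖ ^ 2 / (1 + ‖x‖ ^ 2) ≤ (∑' i, ‖C (e i)‖ ^ 2) + ‖C x - v‖ ^ 2 := by
  set σ := ∑' i, ‖C (e i)‖ ^ 2 with hσdef
  have hσ0 : 0 ≤ σ := tsum_nonneg fun i => sq_nonneg _
  set s := Real.sqrt σ with hsdef
  have hs : s ^ 2 = σ := Real.sq_sqrt hσ0
  have hs0 : 0 ≤ s := Real.sqrt_nonneg σ
  have hCx : ‖C x‖ ^ 2 ≤ σ * ‖x‖ ^ 2 := apply_norm_sq_le e C hC x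
  have hu : ‖C x‖ ≤ s * ‖x‖ := by
    nlinarith [norm_nonneg (C x), norm_nonneg x, mul_nonneg hs0 (norm_nonneg x)]
  have hr : ‖v‖ ≤ s * ‖x‖ + ‖C x - v‖ := by
    have h3 : ‖v‖ ≤ ‖C x‖ + ‖C x - v‖ := by
      have := norm_sub_le (C x) (C x - v)
      simpa using this
    linarith
  have hpos : (0:ℝ) < 1 + ‖x‖ ^ 2 := by positivity
  rw [div_le_iff₀ hpos]
  have hw0 : (0:ℝ) ≤ ‖C x - v‖ := norm_nonneg _
  nlinarith [sq_nonneg (s - ‖C x - v‖ * ‖x‖), norm_nonneg v, norm_nonneg x,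
    mul_le_mul hr hr (norm_nonneg v) (by positivity)]

lemma hs_summable (e : HilbertBasis ι ℝ H) (f : HilbertBasis ι' ℝ F) (C : H →L[ℝ] F)
    (h : Summable fun j => ‖(adjoint C) (f j)‖ ^ 2) :
    Summable fun i => ‖C (e i)‖ ^ 2 := by
  have key : Summable (fun p : ι' × ι => (inner ℝ (C (e p.2)) (f p.1) : ℝ) ^ 2) := by
    rw [summable_prod_of_nonneg (fun p => sq_nonneg _)]
    constructor
    · intro j
      refine (parseval_hasSum e (adjoint C (f j))).summable.congr fun i => ?_
      rw [adjoint_inner_left, real_inner_comm]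
    · refine h.congr fun j => ?_
      rw [← (parseval_hasSum e (adjoint C (f j))).tsum_eq]
      exact tsum_congr fun i => by rw [adjoint_inner_left, real_inner_comm]
  have key2 := key.prod_symm
  have h2 := (summable_prod_of_nonneg (f := fun p : ι × ι' => (inner ℝ (C (e p.1)) (f p.2) : ℝ) ^ 2)
    (fun p => sq_nonneg _)).mp key2
  refine h2.2.congr fun i => ?_
  rw [← (parseval_hasSum f (C (e i))).tsum_eq]

lemma rank_one_hasSum (e : HilbertBasis ι ℝ H) (R : F →L[ℝ] F) (x : H) (v : F) (c : ℝ) :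
    HasSum (fun i => ‖(R.comp (c • (innerSL ℝ x).smulRight v)) (e i)‖ ^ 2)
      (‖x‖ ^ 2 * (c ^ 2 * ‖R v‖ ^ 2)) := by
  refine ((parseval_hasSum e x).mul_right (c ^ 2 * ‖R v‖ ^ 2)).congr_fun fun i => ?_
  simp only [ContinuousLinearMap.comp_apply, ContinuousLinearMap.smul_apply,
    ContinuousLinearMap.smulRight_apply, innerSL_apply_apply, map_smul, norm_smul, mul_pow, sq_abs,
    abs_mul, Real.norm_eq_abs]
  ring

lemma eq_at_opt (e : HilbertBasis ι ℝ H) (R : F →L[ℝ] F) (A : H →L[ℝ] F) (b : F) (x : H) :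
    (∑' i, ‖(R.comp (A - (A + (1 / (1 + ‖x‖ ^ 2)) • (innerSL ℝ x).smulRight (b - A x)))) (e i)‖ ^ 2)
      + ‖R ((A + (1 / (1 + ‖x‖ ^ 2)) • (innerSL ℝ x).smulRight (b - A x)) x - b)‖ ^ 2
    = ‖R (A x - b)‖ ^ 2 / (1 + ‖x‖ ^ 2) := by
  set c : ℝ := 1 / (1 + ‖x‖ ^ 2) with hc
  set v : F := b - A x with hv
  have hpos : (0:ℝ) < 1 + ‖x‖ ^ 2 := by positivity
  have hterm : ∀ i, ‖(R.comp (A - (A + c • (innerSL ℝ x).smulRight v))) (e i)‖ ^ 2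
      = ‖(R.comp (c • (innerSL ℝ x).smulRight v)) (e i)‖ ^ 2 := by
    intro i
    rw [sub_add_cancel_left]
    simp [ContinuousLinearMap.comp_apply]
  have hres : (A + c • (innerSL ℝ x).smulRight v) x - b = (-c) • v := by
    have hxx : (inner ℝ x x : ℝ) = ‖x‖ ^ 2 := real_inner_self_eq_norm_sq x
    have h1 : c * ‖x‖ ^ 2 = 1 - c := by rw [hc]; field_simp; ring
    simp only [ContinuousLinearMap.add_apply, ContinuousLinearMap.smul_apply,
      ContinuousLinearMap.smulRight_apply, innerSL_apply_apply, hxx]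
    rw [smul_smul, h1, sub_smul, one_smul, neg_smul, hv]
    abel
  have hRv : ‖R v‖ = ‖R (A x - b)‖ := by
    rw [hv, show b - A x = -(A x - b) by abel, map_neg, norm_neg]
  rw [tsum_congr hterm, (rank_one_hasSum e R x v c).tsum_eq, hres, map_smul, norm_smul, hRv]
  have hnorm : ‖(-c : ℝ)‖ ^ 2 = c ^ 2 := by
    rw [Real.norm_eq_abs, abs_neg, sq_abs]
  rw [mul_pow, hnorm, hc]
  field_simp
  ring

lemma lower_bound (e : HilbertBasis ι ℝ H) (f : HilbertBasis ι' ℝ F)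
    (R : F →L[ℝ] F) (hR : IsSelfAdjoint R) (hHS : Summable fun j => ‖R (f j)‖ ^ 2)
    (A X : H →L[ℝ] F) (b : F) (x : H) :
    ‖R (A x - b)‖ ^ 2 / (1 + ‖x‖ ^ 2) ≤
      (∑' i, ‖(R.comp (A - X)) (e i)‖ ^ 2) + ‖R (X x - b)‖ ^ 2 := by
  have hsum : Summable fun i => ‖(R.comp (A - X)) (e i)‖ ^ 2 := by
    apply hs_summable e f
    refine Summable.of_nonneg_of_le (fun j => sq_nonneg _) (fun j => ?_)
      (hHS.mul_left (‖adjoint (A - X)‖ ^ 2))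
    rw [adjoint_comp, hR.adjoint_eq]
    have h1 : ‖(adjoint (A - X)) (R (f j))‖ ≤ ‖adjoint (A - X)‖ * ‖R (f j)‖ :=
      (adjoint (A - X)).le_opNorm (R (f j))
    calc ‖((adjoint (A - X)) ∘L R) (f j)‖ ^ 2 = ‖(adjoint (A - X)) (R (f j))‖ ^ 2 := by
          rw [ContinuousLinearMap.comp_apply]
      _ ≤ (‖adjoint (A - X)‖ * ‖R (f j)‖) ^ 2 := pow_le_pow_left₀ (norm_nonneg _) h1 2
      _ = ‖adjoint (A - X)‖ ^ 2 * ‖R (f j)‖ ^ 2 := by ring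
  have hkey := key_lower e (R.comp (A - X)) hsum (R (A x - b)) x
  have hCx : (R.comp (A - X)) x - R (A x - b) = -(R (X x - b)) := by
    simp only [ContinuousLinearMap.comp_apply, ContinuousLinearMap.sub_apply, map_sub]
    abel
  rwa [hCx, norm_neg] at hkey

end Aux

/-- Hilbert spaces `H, F, E`, `A ∈ L(H,F)`, `T ∈ L(H,E)`, `b ∈ F`, `W ∈ L(F)`
positive with square root `R = W^{1/2}` Hilbert–Schmidt, and
`G(x) = ‖Ax−b‖²_W/(1+‖x‖²) + ‖Tx‖²`.  There exists `A₀` such that `(A₀, x₀)` globally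
minimizes the RWTLS objective iff `x₀` globally minimizes `G`; in that case one can take
`A₀ = A + (⟨·,x₀⟩/(1+‖x₀‖²))(b − Ax₀)`. -/
theorem stmt11_RWTLS_iff_G_minimizer
    {H F E ι ι' : Type*} [NormedAddCommGroup H] [InnerProductSpace ℝ H] [CompleteSpace H]
    [NormedAddCommGroup F] [InnerProductSpace ℝ F] [CompleteSpace F]
    [NormedAddCommGroup E] [InnerProductSpace ℝ E] [CompleteSpace E]
    (A : H →L[ℝ] F) (T : H →L[ℝ] E) (b : F) (x₀ : H) (W R : F →L[ℝ] F)
    (hR : R.IsPositive) (hRW : R.comp R = W)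
    (f : HilbertBasis ι' ℝ F) (hHS : Summable fun i => ‖R (f i)‖ ^ 2)
    (e : HilbertBasis ι ℝ H) :
    ((∃ A₀ : H →L[ℝ] F, ∀ (X : H →L[ℝ] F) (x : H),
        ‖T x₀‖ ^ 2 + (∑' i, ‖(R.comp (A - A₀)) (e i)‖ ^ 2) + ‖R (A₀ x₀ - b)‖ ^ 2 ≤
          ‖T x‖ ^ 2 + (∑' i, ‖(R.comp (A - X)) (e i)‖ ^ 2) + ‖R (X x - b)‖ ^ 2) ↔
      (∀ x : H,
        ‖R (A x₀ - b)‖ ^ 2 / (1 + ‖x₀‖ ^ 2) + ‖T x₀‖ ^ 2 ≤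
          ‖R (A x - b)‖ ^ 2 / (1 + ‖x‖ ^ 2) + ‖T x‖ ^ 2)) ∧
    ((∀ x : H,
        ‖R (A x₀ - b)‖ ^ 2 / (1 + ‖x₀‖ ^ 2) + ‖T x₀‖ ^ 2 ≤
          ‖R (A x - b)‖ ^ 2 / (1 + ‖x‖ ^ 2) + ‖T x‖ ^ 2) →
      ∀ (X : H →L[ℝ] F) (x : H),
        ‖T x₀‖ ^ 2 +
          (∑' i, ‖(R.comp (A - (A + (1 / (1 + ‖x₀‖ ^ 2)) •
            (innerSL ℝ x₀).smulRight (b - A x₀)))) (e i)‖ ^ 2) +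
          ‖R ((A + (1 / (1 + ‖x₀‖ ^ 2)) • (innerSL ℝ x₀).smulRight (b - A x₀)) x₀ - b)‖ ^ 2 ≤
        ‖T x‖ ^ 2 + (∑' i, ‖(R.comp (A - X)) (e i)‖ ^ 2) + ‖R (X x - b)‖ ^ 2) := by
  have hRsa : IsSelfAdjoint R := hR.isSelfAdjoint
  have part2 : (∀ x : H,
        ‖R (A x₀ - b)‖ ^ 2 / (1 + ‖x₀‖ ^ 2) + ‖T x₀‖ ^ 2 ≤
          ‖R (A x - b)‖ ^ 2 / (1 + ‖x‖ ^ 2) + ‖T x‖ ^ 2) →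
      ∀ (X : H →L[ℝ] F) (x : H),
        ‖T x₀‖ ^ 2 +
          (∑' i, ‖(R.comp (A - (A + (1 / (1 + ‖x₀‖ ^ 2)) •
            (innerSL ℝ x₀).smulRight (b - A x₀)))) (e i)‖ ^ 2) +
          ‖R ((A + (1 / (1 + ‖x₀‖ ^ 2)) • (innerSL ℝ x₀).smulRight (b - A x₀)) x₀ - b)‖ ^ 2 ≤
        ‖T x‖ ^ 2 + (∑' i, ‖(R.comp (A - X)) (e i)‖ ^ 2) + ‖R (X x - b)‖ ^ 2 := by
    intro hG X x
    have h0 := eq_at_opt e R A b x₀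
    have h1 := hG x
    have h2 := lower_bound e f R hRsa hHS A X b x
    linarith
  refine ⟨⟨?_, fun hG => ⟨_, part2 hG⟩⟩, part2⟩
  rintro ⟨A₀, hA₀⟩ x
  have h1 := lower_bound e f R hRsa hHS A A₀ b x₀
  have h2 := hA₀ (A + (1 / (1 + ‖x‖ ^ 2)) • (innerSL ℝ x).smulRight (b - A x)) x
  have h3 := eq_at_opt e R A b x
  linarith
end

section
/- Let H be a real Hilbert space, A ∈ L(H,F), b ∈ F, W ∈ L(F)⁺ with W^{1/2} ∈ S₂, ρ > 0, and let t* = inf_{x∈H} [ ‖Ax−b‖²_W/(1+‖x‖²) + ρ‖x‖² ]. Then: (a) inf_{x} [ ‖Ax−b‖²_W + ρ‖x‖⁴ + (ρ − t*)‖x‖² − t* ] = 0; (b) x₀ minimizes G(x) = ‖Ax−b‖²_W/(1+‖x‖²) + ρ‖x‖² if and only if x₀ minimizes x ↦ ‖Ax−b‖²_W + ρ‖x‖⁴ + (ρ−t*)‖x‖² − t*, and at any such minimizer the latter expression equals 0. -/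
/-- Dinkelbach reduction: real Hilbert spaces `H, F`, `A ∈ L(H,F)`, `b ∈ F`,
`W ∈ L(F)` positive with square root `R = W^{1/2}` Hilbert–Schmidt, `ρ > 0`, and
`t* = inf_x [‖Ax−b‖²_W/(1+‖x‖²) + ρ‖x‖²]`.  Then
(a) `inf_x [‖Ax−b‖²_W + ρ‖x‖⁴ + (ρ−t*)‖x‖² − t*] = 0`, and
(b) `x₀` minimizes `G(x) = ‖Ax−b‖²_W/(1+‖x‖²) + ρ‖x‖²` iff `x₀` minimizes
`x ↦ ‖Ax−b‖²_W + ρ‖x‖⁴ + (ρ−t*)‖x‖² − t*`, and at any such minimizer the latter equals 0. -/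
theorem stmt12_dinkelbach
    {H F ι' : Type*} [NormedAddCommGroup H] [InnerProductSpace ℝ H] [CompleteSpace H]
    [NormedAddCommGroup F] [InnerProductSpace ℝ F] [CompleteSpace F]
    (A : H →L[ℝ] F) (b : F) (W R : F →L[ℝ] F)
    (hR : R.IsPositive) (hRW : R.comp R = W)
    (f : HilbertBasis ι' ℝ F) (hHS : Summable fun i => ‖R (f i)‖ ^ 2)
    (ρ : ℝ) (hρ : 0 < ρ) (t : ℝ)
    (ht : t = ⨅ x : H, (‖R (A x - b)‖ ^ 2 / (1 + ‖x‖ ^ 2) + ρ * ‖x‖ ^ 2)) :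
    (⨅ x : H, (‖R (A x - b)‖ ^ 2 + ρ * ‖x‖ ^ 4 + (ρ - t) * ‖x‖ ^ 2 - t)) = 0 ∧
    ∀ x₀ : H,
      ((∀ x : H, ‖R (A x₀ - b)‖ ^ 2 / (1 + ‖x₀‖ ^ 2) + ρ * ‖x₀‖ ^ 2 ≤
          ‖R (A x - b)‖ ^ 2 / (1 + ‖x‖ ^ 2) + ρ * ‖x‖ ^ 2) ↔
        (∀ x : H, ‖R (A x₀ - b)‖ ^ 2 + ρ * ‖x₀‖ ^ 4 + (ρ - t) * ‖x₀‖ ^ 2 - t ≤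
          ‖R (A x - b)‖ ^ 2 + ρ * ‖x‖ ^ 4 + (ρ - t) * ‖x‖ ^ 2 - t)) ∧
      ((∀ x : H, ‖R (A x₀ - b)‖ ^ 2 / (1 + ‖x₀‖ ^ 2) + ρ * ‖x₀‖ ^ 2 ≤
          ‖R (A x - b)‖ ^ 2 / (1 + ‖x‖ ^ 2) + ρ * ‖x‖ ^ 2) →
        ‖R (A x₀ - b)‖ ^ 2 + ρ * ‖x₀‖ ^ 4 + (ρ - t) * ‖x₀‖ ^ 2 - t = 0) := by
  set g : H → ℝ := fun x => ‖R (A x - b)‖ ^ 2 / (1 + ‖x‖ ^ 2) + ρ * ‖x‖ ^ 2 with hg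
  set φ : H → ℝ := fun x => ‖R (A x - b)‖ ^ 2 + ρ * ‖x‖ ^ 4 + (ρ - t) * ‖x‖ ^ 2 - t with hφ
  have hpos : ∀ x : H, (0:ℝ) < 1 + ‖x‖ ^ 2 := fun x => by positivity
  have hkey : ∀ x : H, φ x = (1 + ‖x‖ ^ 2) * (g x - t) := by
    intro x
    have h0 := (hpos x).ne'
    simp only [hφ, hg]
    field_simp
    ring
  have hg0 : ∀ x : H, (0:ℝ) ≤ g x := fun x => by
    have := hpos x
    positivity
  have hbdd : BddBelow (Set.range g) := ⟨0, by rintro _ ⟨x, rfl⟩; exact hg0 x⟩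
  have ht_le : ∀ x : H, t ≤ g x := fun x => ht ▸ ciInf_le hbdd x
  have ht0 : (0:ℝ) ≤ t := ht ▸ le_ciInf hg0
  have hφ0 : ∀ x : H, (0:ℝ) ≤ φ x := by
    intro x
    rw [hkey x]
    exact mul_nonneg (hpos x).le (sub_nonneg.2 (ht_le x))
  have hmin_iff : ∀ x₀ : H, (∀ x, g x₀ ≤ g x) ↔ g x₀ = t := by
    intro x₀
    constructor
    · intro h
      exact le_antisymm (ht ▸ le_ciInf h) (ht_le x₀)
    · intro h x
      exact h ▸ ht_le x
  have ha : (⨅ x : H, φ x) = 0 := by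
    refine le_antisymm ?_ (le_ciInf hφ0)
    have hφbdd : BddBelow (Set.range φ) := ⟨0, by rintro _ ⟨x, rfl⟩; exact hφ0 x⟩
    refine le_of_forall_pos_le_add ?_
    intro ε hε
    set C : ℝ := 1 + (t + 1) / ρ with hC
    have hCpos : (0:ℝ) < C := by positivity
    set ε' : ℝ := min 1 (ε / C) with hε'
    have hε'pos : 0 < ε' := lt_min one_pos (div_pos hε hCpos)
    have : t < t + ε' := by linarith
    obtain ⟨x, hx⟩ := exists_lt_of_ciInf_lt (ht ▸ this : (⨅ x : H, g x) < t + ε')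
    have hxn : ‖x‖ ^ 2 ≤ (t + 1) / ρ := by
      have h1 : ρ * ‖x‖ ^ 2 ≤ g x := by
        have : (0:ℝ) ≤ ‖R (A x - b)‖ ^ 2 / (1 + ‖x‖ ^ 2) := by
          have := hpos x; positivity
        simp only [hg]; linarith
      have h2 : ε' ≤ 1 := min_le_left _ _
      rw [le_div_iff₀ hρ]
      nlinarith
    have hφx : φ x ≤ ε := by
      rw [hkey x]
      have h1 : g x - t ≤ ε' := by linarith
      have h2 : (1 + ‖x‖ ^ 2) ≤ C := by simp only [hC]; linarith
      have h3 : (1 + ‖x‖ ^ 2) * (g x - t) ≤ C * ε' :=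
        mul_le_mul h2 h1 (by linarith [hg0 x, ht_le x]) hCpos.le
      have h4 : C * ε' ≤ C * (ε / C) :=
        mul_le_mul_of_nonneg_left (min_le_right _ _) hCpos.le
      have h5 : C * (ε / C) = ε := by field_simp
      exact le_trans h3 (le_trans h4 h5.le)
    calc (⨅ x : H, φ x) ≤ φ x := ciInf_le hφbdd x
    _ ≤ 0 + ε := by linarith
  have hzero : ∀ x₀ : H, g x₀ = t → φ x₀ = 0 := by
    intro x₀ h
    rw [hkey x₀, h, sub_self, mul_zero]
  refine ⟨ha, fun x₀ => ⟨⟨?_, ?_⟩, ?_⟩⟩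
  · intro h x
    have := hzero x₀ ((hmin_iff x₀).1 h)
    calc φ x₀ = 0 := this
    _ ≤ φ x := hφ0 x
  · intro h
    have h1 : φ x₀ ≤ 0 := ha ▸ le_ciInf h
    have h2 : φ x₀ = 0 := le_antisymm h1 (hφ0 x₀)
    have h3 : g x₀ = t := by
      have := hkey x₀
      rw [h2] at this
      have := (mul_eq_zero.1 this.symm).resolve_left (hpos x₀).ne'
      linarith
    exact (hmin_iff x₀).2 h3
  · intro h
    exact hzero x₀ ((hmin_iff x₀).1 h)
end

section
/- Let H be a real Hilbert space, A ∈ L(H,F), b ∈ F, W ∈ L(F)⁺ with W^{1/2} ∈ S₂, ρ > 0, and set t* = inf_x G(x) where G(x) = ‖Ax−b‖²_W/(1+‖x‖²) + ρ‖x‖². The function φ(t) = inf_x [‖Ax−b‖²_W + ρ‖x‖⁴ + (ρ−t)‖x‖² − t] is strictly decreasing in t, and t* is its unique zero. -/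
/-- real Hilbert spaces `H, F`, `A ∈ L(H,F)`, `b ∈ F`, `W ∈ L(F)` positive
with square root `R = W^{1/2}` Hilbert–Schmidt, `ρ > 0`, and
`t* = inf_x G(x)` with `G(x) = ‖Ax−b‖²_W/(1+‖x‖²) + ρ‖x‖²`.  The function
`φ(t) = inf_x [‖Ax−b‖²_W + ρ‖x‖⁴ + (ρ−t)‖x‖² − t]` is strictly decreasing and `t*` is its
unique zero. -/
theorem stmt13_phi_strict_anti_unique_zero
    {H F ι' : Type*} [NormedAddCommGroup H] [InnerProductSpace ℝ H] [CompleteSpace H]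
    [NormedAddCommGroup F] [InnerProductSpace ℝ F] [CompleteSpace F]
    (A : H →L[ℝ] F) (b : F) (W R : F →L[ℝ] F)
    (hR : R.IsPositive) (hRW : R.comp R = W)
    (f : HilbertBasis ι' ℝ F) (hHS : Summable fun i => ‖R (f i)‖ ^ 2)
    (ρ : ℝ) (hρ : 0 < ρ) (t' : ℝ)
    (ht' : t' = ⨅ x : H, (‖R (A x - b)‖ ^ 2 / (1 + ‖x‖ ^ 2) + ρ * ‖x‖ ^ 2))
    (φ : ℝ → ℝ)
    (hφ : ∀ t : ℝ, φ t = ⨅ x : H,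
        (‖R (A x - b)‖ ^ 2 + ρ * ‖x‖ ^ 4 + (ρ - t) * ‖x‖ ^ 2 - t)) :
    StrictAnti φ ∧ φ t' = 0 ∧ ∀ t : ℝ, φ t = 0 → t = t' := by
  have hne : Nonempty H := ⟨0⟩
  set G : H → ℝ := fun x => ‖R (A x - b)‖ ^ 2 / (1 + ‖x‖ ^ 2) + ρ * ‖x‖ ^ 2 with hG
  set g : ℝ → H → ℝ := fun t x =>
    ‖R (A x - b)‖ ^ 2 + ρ * ‖x‖ ^ 4 + (ρ - t) * ‖x‖ ^ 2 - t with hg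
  have hpos : ∀ x : H, (0:ℝ) < 1 + ‖x‖ ^ 2 := fun x => by positivity
  have key : ∀ (t : ℝ) (x : H), g t x = (1 + ‖x‖ ^ 2) * (G x - t) := by
    intro t x
    have h := (hpos x).ne'
    simp only [hg, hG]
    field_simp
    ring
  have hbdd : ∀ t : ℝ, BddBelow (Set.range (g t)) := by
    intro t
    refine ⟨-(ρ - t) ^ 2 / (4 * ρ) - t, ?_⟩
    rintro _ ⟨x, rfl⟩
    have h1 : (0:ℝ) ≤ ‖R (A x - b)‖ ^ 2 := sq_nonneg _
    simp only [hg]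
    have h4 : ‖x‖ ^ 4 = (‖x‖ ^ 2) ^ 2 := by ring
    rw [h4]
    have h3 : -(ρ - t) ^ 2 / (4 * ρ) ≤ ρ * (‖x‖ ^ 2) ^ 2 + (ρ - t) * ‖x‖ ^ 2 := by
      rw [div_le_iff₀ (by positivity : (0:ℝ) < 4 * ρ)]
      nlinarith [sq_nonneg (2 * ρ * ‖x‖ ^ 2 + (ρ - t))]
    linarith
  have hGbdd : BddBelow (Set.range G) := by
    refine ⟨0, ?_⟩
    rintro _ ⟨x, rfl⟩
    have := hpos x
    positivity
  have hGle : ∀ x : H, t' ≤ G x := by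
    intro x
    rw [ht']
    exact ciInf_le hGbdd x
  have hanti : StrictAnti φ := by
    intro t s hts
    rw [hφ t, hφ s]
    have hstep : (⨅ x, g s x) + (s - t) ≤ ⨅ x, g t x := by
      refine le_ciInf fun x => ?_
      have h1 : (⨅ x, g s x) ≤ g s x := ciInf_le (hbdd s) x
      have h2 : g s x + (s - t) ≤ g t x := by
        simp only [hg]
        nlinarith [sq_nonneg ‖x‖, sub_pos.2 hts]
      linarith
    have : (0:ℝ) < s - t := sub_pos.2 hts
    linarith
  have hzero : φ t' = 0 := by
    have hge : 0 ≤ φ t' := by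
      rw [hφ]
      refine le_ciInf fun x => ?_
      have := key t' x
      simp only [hg] at this
      rw [this]
      exact mul_nonneg (hpos x).le (sub_nonneg.2 (hGle x))
    have ht'0 : 0 ≤ t' := by
      rw [ht']
      refine le_ciInf fun x => ?_
      have := hpos x
      positivity
    have hle : φ t' ≤ 0 := by
      refine le_of_forall_pos_le_add fun ε hε => ?_
      set M : ℝ := 1 + (t' + 1) / ρ with hM
      have hMpos : 0 < M := by positivity
      set δ : ℝ := min 1 (ε / M) with hδ
      have hδpos : 0 < δ := lt_min one_pos (by positivity)
      have hlt : t' < t' + δ := by linarith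
      rw [ht'] at hlt
      obtain ⟨x, hx⟩ := exists_lt_of_ciInf_lt hlt
      have hxG : G x < t' + δ := by rw [ht']; exact hx
      have hρx : ρ * ‖x‖ ^ 2 ≤ G x := by
        have := hpos x
        have h1 : (0:ℝ) ≤ ‖R (A x - b)‖ ^ 2 / (1 + ‖x‖ ^ 2) := by positivity
        simp only [hG]; linarith
      have hxb : ‖x‖ ^ 2 < (t' + 1) / ρ := by
        have hδ1 : δ ≤ 1 := min_le_left _ _
        rw [lt_div_iff₀ hρ]
        nlinarith
      have hφle : φ t' ≤ g t' x := by
        rw [hφ]; exact ciInf_le (hbdd t') x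
      have hgx : g t' x ≤ M * δ := by
        rw [key t' x]
        have h1 : 0 ≤ G x - t' := sub_nonneg.2 (hGle x)
        have h2 : 1 + ‖x‖ ^ 2 ≤ M := by simp only [hM]; linarith
        have h3 : G x - t' ≤ δ := by linarith
        nlinarith [hpos x]
      have hMδ : M * δ ≤ ε := by
        have : δ ≤ ε / M := min_le_right _ _
        calc M * δ ≤ M * (ε / M) := by nlinarith
        _ = ε := by field_simp
      linarith
    linarith
  exact ⟨hanti, hzero, fun t ht0 => hanti.injective (ht0.trans hzero.symm)⟩
end

section
/- Let H be a real Hilbert space, A ∈ L(H,F), b ∈ F, W ∈ L(F)⁺ with W^{1/2} ∈ S₂, ρ > 0, and t* = inf_x G(x) with G(x) = ‖Ax−b‖²_W/(1+‖x‖²) + ρ‖x‖². If ρ ≥ t*, then the function x ↦ ‖Ax−b‖²_W + ρ‖x‖⁴ + (ρ−t*)‖x‖² − t* is strictly convex and coercive, hence has a unique minimizer x₀, and x₀ is the unique minimizer of G. In particular, since t* ≤ G(0) = ‖b‖²_W, if ρ ≥ ‖b‖²_W then G has a unique global minimizer. -/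
open Filter

private lemma aux_normsq_combo {E : Type*} [NormedAddCommGroup E] [InnerProductSpace ℝ E]
    (x y : E) (s r : ℝ) (hsr : s + r = 1) :
    ‖s • x + r • y‖ ^ 2 = s * ‖x‖ ^ 2 + r * ‖y‖ ^ 2 - s * r * ‖x - y‖ ^ 2 := by
  have hr : r = 1 - s := by linarith
  subst hr
  have h1 : ‖s • x‖ ^ 2 = s ^ 2 * ‖x‖ ^ 2 := by
    rw [norm_smul, mul_pow, Real.norm_eq_abs, sq_abs]
  have h2 : ‖(1 - s) • y‖ ^ 2 = (1 - s) ^ 2 * ‖y‖ ^ 2 := by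
    rw [norm_smul, mul_pow, Real.norm_eq_abs, sq_abs]
  have e1 : ‖s • x + (1 - s) • y‖ ^ 2
      = ‖s • x‖ ^ 2 + 2 * (inner ℝ (s • x) ((1 - s) • y) : ℝ) + ‖(1 - s) • y‖ ^ 2 :=
    norm_add_sq_real _ _
  have e2 : ‖x - y‖ ^ 2 = ‖x‖ ^ 2 - 2 * (inner ℝ x y : ℝ) + ‖y‖ ^ 2 := norm_sub_sq_real x y
  have e3 : (inner ℝ (s • x) ((1 - s) • y) : ℝ) = s * ((1 - s) * (inner ℝ x y : ℝ)) := by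
    rw [real_inner_smul_left, real_inner_smul_right]
  rw [e1, e2, e3, h1, h2]
  ring

private lemma aux_gconv {H F : Type*} [NormedAddCommGroup H] [InnerProductSpace ℝ H]
    [NormedAddCommGroup F] [InnerProductSpace ℝ F]
    (A : H →L[ℝ] F) (b : F) (R : F →L[ℝ] F) (x y : H) (s r : ℝ)
    (hs : 0 ≤ s) (hr : 0 ≤ r) (hsr : s + r = 1) :
    ‖R (A (s • x + r • y) - b)‖ ^ 2 ≤ s * ‖R (A x - b)‖ ^ 2 + r * ‖R (A y - b)‖ ^ 2 := by
  have haff : A (s • x + r • y) - b = s • (A x - b) + r • (A y - b) := by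
    have hmod : s • (A x - b) + r • (A y - b) = s • A x + r • A y - (s + r) • b := by
      module
    rw [map_add, map_smul, map_smul, hmod, hsr, one_smul]
  have hkey : R (A (s • x + r • y) - b) = s • R (A x - b) + r • R (A y - b) := by
    rw [haff, map_add, map_smul, map_smul]
  have hn : ‖R (A (s • x + r • y) - b)‖ ≤ s * ‖R (A x - b)‖ + r * ‖R (A y - b)‖ := by
    rw [hkey]
    calc ‖s • R (A x - b) + r • R (A y - b)‖
        ≤ ‖s • R (A x - b)‖ + ‖r • R (A y - b)‖ := norm_add_le _ _
      _ = s * ‖R (A x - b)‖ + r * ‖R (A y - b)‖ := by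
          rw [norm_smul, norm_smul, Real.norm_eq_abs, Real.norm_eq_abs,
            abs_of_nonneg hs, abs_of_nonneg hr]
  nlinarith [norm_nonneg (R (A x - b)), norm_nonneg (R (A y - b)),
    norm_nonneg (R (A (s • x + r • y) - b)),
    sq_nonneg (‖R (A x - b)‖ - ‖R (A y - b)‖), mul_nonneg hs hr]

set_option maxHeartbeats 1000000 in
/-- real Hilbert spaces `H, F`, `A ∈ L(H,F)`, `b ∈ F`, `W ∈ L(F)` positive
with square root `R = W^{1/2}` Hilbert–Schmidt, `ρ > 0`, `t* = inf_x G(x)` with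
`G(x) = ‖Ax−b‖²_W/(1+‖x‖²) + ρ‖x‖²`.  If `ρ ≥ t*` then the function
`h(x) = ‖Ax−b‖²_W + ρ‖x‖⁴ + (ρ−t*)‖x‖² − t*` is strictly convex and coercive, has a unique
minimizer `x₀`, and `x₀` is also the unique minimizer of `G`.  Moreover `t* ≤ G(0) = ‖b‖²_W`
(so in particular if `ρ ≥ ‖b‖²_W` then `G` has a unique global minimizer). -/
theorem stmt14_unique_solution_rho_ge_tstar
    {H F ι' : Type*} [NormedAddCommGroup H] [InnerProductSpace ℝ H] [CompleteSpace H]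
    [NormedAddCommGroup F] [InnerProductSpace ℝ F] [CompleteSpace F]
    (A : H →L[ℝ] F) (b : F) (W R : F →L[ℝ] F)
    (hR : R.IsPositive) (hRW : R.comp R = W)
    (f : HilbertBasis ι' ℝ F) (hHS : Summable fun i => ‖R (f i)‖ ^ 2)
    (ρ : ℝ) (hρ : 0 < ρ) (t : ℝ)
    (ht : t = ⨅ x : H, (‖R (A x - b)‖ ^ 2 / (1 + ‖x‖ ^ 2) + ρ * ‖x‖ ^ 2))
    (hρt : t ≤ ρ) :
    StrictConvexOn ℝ Set.univ
        (fun x : H => ‖R (A x - b)‖ ^ 2 + ρ * ‖x‖ ^ 4 + (ρ - t) * ‖x‖ ^ 2 - t) ∧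
    Filter.Tendsto
        (fun x : H => ‖R (A x - b)‖ ^ 2 + ρ * ‖x‖ ^ 4 + (ρ - t) * ‖x‖ ^ 2 - t)
        (Bornology.cobounded H) Filter.atTop ∧
    (∃ x₀ : H,
        (∀ x : H, ‖R (A x₀ - b)‖ ^ 2 + ρ * ‖x₀‖ ^ 4 + (ρ - t) * ‖x₀‖ ^ 2 - t ≤
            ‖R (A x - b)‖ ^ 2 + ρ * ‖x‖ ^ 4 + (ρ - t) * ‖x‖ ^ 2 - t) ∧
        (∀ y : H, (∀ x : H, ‖R (A y - b)‖ ^ 2 + ρ * ‖y‖ ^ 4 + (ρ - t) * ‖y‖ ^ 2 - t ≤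
            ‖R (A x - b)‖ ^ 2 + ρ * ‖x‖ ^ 4 + (ρ - t) * ‖x‖ ^ 2 - t) → y = x₀) ∧
        (∀ x : H, ‖R (A x₀ - b)‖ ^ 2 / (1 + ‖x₀‖ ^ 2) + ρ * ‖x₀‖ ^ 2 ≤
            ‖R (A x - b)‖ ^ 2 / (1 + ‖x‖ ^ 2) + ρ * ‖x‖ ^ 2) ∧
        (∀ y : H, (∀ x : H, ‖R (A y - b)‖ ^ 2 / (1 + ‖y‖ ^ 2) + ρ * ‖y‖ ^ 2 ≤
            ‖R (A x - b)‖ ^ 2 / (1 + ‖x‖ ^ 2) + ρ * ‖x‖ ^ 2) → y = x₀)) ∧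
    t ≤ ‖R b‖ ^ 2 := by
  have hρt' : (0:ℝ) ≤ ρ - t := by linarith
  -- basic facts about Q (the function G)
  have hQ0 : ∀ x : H, 0 ≤ ‖R (A x - b)‖ ^ 2 / (1 + ‖x‖ ^ 2) + ρ * ‖x‖ ^ 2 := by
    intro x; positivity
  have hbdd : BddBelow (Set.range fun x : H =>
      ‖R (A x - b)‖ ^ 2 / (1 + ‖x‖ ^ 2) + ρ * ‖x‖ ^ 2) :=
    ⟨0, by rintro _ ⟨x, rfl⟩; exact hQ0 x⟩
  have htle : ∀ x : H, t ≤ ‖R (A x - b)‖ ^ 2 / (1 + ‖x‖ ^ 2) + ρ * ‖x‖ ^ 2 := by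
    intro x; rw [ht]; exact ciInf_le hbdd x
  have ht0 : 0 ≤ t := by rw [ht]; exact le_ciInf hQ0
  -- identity P = (1+‖x‖²)(Q - t)
  have hPQ : ∀ x : H, ‖R (A x - b)‖ ^ 2 + ρ * ‖x‖ ^ 4 + (ρ - t) * ‖x‖ ^ 2 - t
      = (1 + ‖x‖ ^ 2) * ((‖R (A x - b)‖ ^ 2 / (1 + ‖x‖ ^ 2) + ρ * ‖x‖ ^ 2) - t) := by
    intro x
    have h2 : (1 + ‖x‖ ^ 2) ≠ 0 := by positivity
    field_simp
    ring
  -- P is nonnegative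
  have hP0 : ∀ x : H, 0 ≤ ‖R (A x - b)‖ ^ 2 + ρ * ‖x‖ ^ 4 + (ρ - t) * ‖x‖ ^ 2 - t := by
    intro x
    rw [hPQ x]
    have h2 : (0:ℝ) < 1 + ‖x‖ ^ 2 := by positivity
    exact mul_nonneg h2.le (sub_nonneg.2 (htle x))
  -- midpoint estimate
  have hmid : ∀ x y : H, ρ * ‖x - y‖ ^ 4 / 16 ≤
      ((‖R (A x - b)‖ ^ 2 + ρ * ‖x‖ ^ 4 + (ρ - t) * ‖x‖ ^ 2 - t)
        + (‖R (A y - b)‖ ^ 2 + ρ * ‖y‖ ^ 4 + (ρ - t) * ‖y‖ ^ 2 - t)) / 2 := by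
    intro x y
    have h0 := hP0 ((1/2 : ℝ) • x + (1/2 : ℝ) • y)
    have hgc := aux_gconv A b R x y (1/2) (1/2) (by norm_num) (by norm_num) (by norm_num)
    have hz := aux_normsq_combo x y (1/2) (1/2) (by norm_num)
    have hm0 : (0:ℝ) ≤ ‖(1/2 : ℝ) • x + (1/2 : ℝ) • y‖ ^ 2 := by positivity
    have hd0 : (0:ℝ) ≤ ‖x - y‖ ^ 2 := by positivity
    have hz4 : ‖(1/2 : ℝ) • x + (1/2 : ℝ) • y‖ ^ 4
        = ((1/2) * ‖x‖ ^ 2 + (1/2) * ‖y‖ ^ 2 - (1/2) * (1/2) * ‖x - y‖ ^ 2) ^ 2 := by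
      rw [show ‖(1/2 : ℝ) • x + (1/2 : ℝ) • y‖ ^ 4
          = (‖(1/2 : ℝ) • x + (1/2 : ℝ) • y‖ ^ 2) ^ 2 by ring, hz]
    rw [hz4, hz] at h0
    rw [hz] at hm0
    nlinarith [h0, hgc, hd0,
      mul_nonneg hρ.le (sq_nonneg (‖x‖ ^ 2 - ‖y‖ ^ 2)),
      mul_nonneg (mul_nonneg hρ.le hd0) hm0,
      mul_nonneg hρt' hd0]
  -- strict convexity
  have hsc : StrictConvexOn ℝ Set.univ
      (fun x : H => ‖R (A x - b)‖ ^ 2 + ρ * ‖x‖ ^ 4 + (ρ - t) * ‖x‖ ^ 2 - t) := by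
    refine ⟨convex_univ, ?_⟩
    intro x _ y _ hxy s r hs hr hsr
    simp only [smul_eq_mul]
    have hr1 : r = 1 - s := by linarith
    subst hr1
    have hgc := aux_gconv A b R x y s (1 - s) hs.le hr.le hsr
    have hz := aux_normsq_combo x y s (1 - s) hsr
    have hd : (0:ℝ) < ‖x - y‖ ^ 2 := pow_pos (norm_sub_pos_iff.2 hxy) 2
    have hm0 : (0:ℝ) ≤ ‖s • x + (1 - s) • y‖ ^ 2 := by positivity
    have hz4 : ‖s • x + (1 - s) • y‖ ^ 4
        = (s * ‖x‖ ^ 2 + (1 - s) * ‖y‖ ^ 2 - s * (1 - s) * ‖x - y‖ ^ 2) ^ 2 := by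
      rw [show ‖s • x + (1 - s) • y‖ ^ 4 = (‖s • x + (1 - s) • y‖ ^ 2) ^ 2 by ring, hz]
    have habd : 0 < s * (1 - s) * ‖x - y‖ ^ 2 := mul_pos (mul_pos hs hr) hd
    rw [hz4, hz]
    rw [hz] at hm0
    nlinarith [hgc, habd,
      mul_pos hρ (mul_pos habd habd),
      mul_nonneg hρ.le (mul_nonneg habd.le hm0),
      mul_nonneg hρt' habd.le,
      mul_nonneg hρ.le (mul_nonneg (mul_nonneg hs.le hr.le) (sq_nonneg (‖x‖ ^ 2 - ‖y‖ ^ 2)))]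
  -- coercivity
  have hco : Tendsto
      (fun x : H => ‖R (A x - b)‖ ^ 2 + ρ * ‖x‖ ^ 4 + (ρ - t) * ‖x‖ ^ 2 - t)
      (Bornology.cobounded H) atTop := by
    have hlow : ∀ x : H, ρ * ‖x‖ ^ 4 - t
        ≤ ‖R (A x - b)‖ ^ 2 + ρ * ‖x‖ ^ 4 + (ρ - t) * ‖x‖ ^ 2 - t := by
      intro x
      have h1 : (0:ℝ) ≤ ‖R (A x - b)‖ ^ 2 := by positivity
      have h2 : (0:ℝ) ≤ (ρ - t) * ‖x‖ ^ 2 := mul_nonneg hρt' (by positivity)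
      linarith
    have h2 : Tendsto (fun z : ℝ => ρ * z ^ 4 - t) atTop atTop := by
      have h1 := (tendsto_pow_atTop (n := 4) (by norm_num)).const_mul_atTop hρ
      simpa [sub_eq_add_neg] using tendsto_atTop_add_const_right atTop (-t) h1
    exact tendsto_atTop_mono hlow (h2.comp tendsto_norm_cobounded_atTop)
  -- minimizing sequence
  have hseq : ∀ n : ℕ, ∃ x : H,
      ‖R (A x - b)‖ ^ 2 / (1 + ‖x‖ ^ 2) + ρ * ‖x‖ ^ 2 < t + 1 / (n + 1) := by
    intro n
    apply exists_lt_of_ciInf_lt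
    rw [← ht]
    have : (0:ℝ) < 1 / ((n:ℝ) + 1) := by positivity
    linarith
  choose u hu using hseq
  have hub : ∀ n : ℕ, ‖u n‖ ^ 2 ≤ (t + 1) / ρ := by
    intro n
    have h1 := hu n
    have h2 : ρ * ‖u n‖ ^ 2
        ≤ ‖R (A (u n) - b)‖ ^ 2 / (1 + ‖u n‖ ^ 2) + ρ * ‖u n‖ ^ 2 :=
      le_add_of_nonneg_left (by positivity)
    have h3 : (1:ℝ) / ((n:ℝ) + 1) ≤ 1 := by
      rw [div_le_one (by positivity)]
      have : (0:ℝ) ≤ (n:ℝ) := Nat.cast_nonneg n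
      linarith
    rw [le_div_iff₀ hρ]
    nlinarith
  have hc0 : (0:ℝ) ≤ 1 + (t + 1) / ρ := by
    have : (0:ℝ) ≤ (t + 1) / ρ := div_nonneg (by linarith) hρ.le
    linarith
  have hPu : ∀ n : ℕ, ‖R (A (u n) - b)‖ ^ 2 + ρ * ‖u n‖ ^ 4 + (ρ - t) * ‖u n‖ ^ 2 - t
      ≤ (1 + (t + 1) / ρ) / ((n:ℝ) + 1) := by
    intro n
    rw [hPQ (u n)]
    have h1 : (‖R (A (u n) - b)‖ ^ 2 / (1 + ‖u n‖ ^ 2) + ρ * ‖u n‖ ^ 2) - t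
        ≤ 1 / ((n:ℝ) + 1) := by have := hu n; linarith
    have h1' : 0 ≤ (‖R (A (u n) - b)‖ ^ 2 / (1 + ‖u n‖ ^ 2) + ρ * ‖u n‖ ^ 2) - t :=
      sub_nonneg.2 (htle (u n))
    have h2 : 1 + ‖u n‖ ^ 2 ≤ 1 + (t + 1) / ρ := by have := hub n; linarith
    have h3 : (0:ℝ) ≤ 1 + ‖u n‖ ^ 2 := by positivity
    calc (1 + ‖u n‖ ^ 2) * ((‖R (A (u n) - b)‖ ^ 2 / (1 + ‖u n‖ ^ 2) + ρ * ‖u n‖ ^ 2) - t)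
        ≤ (1 + (t + 1) / ρ) * (1 / ((n:ℝ) + 1)) := mul_le_mul h2 h1 h1' hc0
      _ = (1 + (t + 1) / ρ) / ((n:ℝ) + 1) := by ring
  -- Cauchy
  have hcauchy : CauchySeq u := by
    rw [Metric.cauchySeq_iff]
    intro ε hε
    have hε4 : (0:ℝ) < ρ * ε ^ 4 := by positivity
    obtain ⟨N, hN⟩ := exists_nat_gt (16 * (1 + (t + 1) / ρ) / (ρ * ε ^ 4))
    refine ⟨N, fun m hm n hn => ?_⟩
    have h1 := hmid (u m) (u n)
    have h2 := hPu m
    have h3 := hPu n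
    have hcm : (1 + (t + 1) / ρ) / ((m:ℝ) + 1) ≤ (1 + (t + 1) / ρ) / ((N:ℝ) + 1) := by
      gcongr

    have hcn : (1 + (t + 1) / ρ) / ((n:ℝ) + 1) ≤ (1 + (t + 1) / ρ) / ((N:ℝ) + 1) := by
      gcongr

    have h5 : (1 + (t + 1) / ρ) / ((N:ℝ) + 1) < ρ * ε ^ 4 / 16 := by
      rw [div_lt_div_iff₀ (by positivity) (by norm_num)]
      rw [div_lt_iff₀ hε4] at hN
      nlinarith [hε4]
    have h6 : ρ * ‖u m - u n‖ ^ 4 < ρ * ε ^ 4 := by linarith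
    have h7 : ‖u m - u n‖ ^ 4 < ε ^ 4 := lt_of_mul_lt_mul_left h6 hρ.le
    rw [dist_eq_norm]
    exact lt_of_pow_lt_pow_left₀ 4 hε.le h7
  obtain ⟨x₀, hx₀⟩ := cauchySeq_tendsto_of_complete hcauchy
  have hcont : Continuous
      (fun x : H => ‖R (A x - b)‖ ^ 2 + ρ * ‖x‖ ^ 4 + (ρ - t) * ‖x‖ ^ 2 - t) := by
    have h1 : Continuous fun x : H => R (A x - b) :=
      R.continuous.comp (A.continuous.sub continuous_const)
    fun_prop
  have hlim0 : Tendsto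
      (fun n : ℕ => ‖R (A (u n) - b)‖ ^ 2 + ρ * ‖u n‖ ^ 4 + (ρ - t) * ‖u n‖ ^ 2 - t)
      atTop (nhds 0) := by
    apply squeeze_zero (fun n => hP0 (u n)) hPu
    have h1 := tendsto_one_div_add_atTop_nhds_zero_nat.const_mul (1 + (t + 1) / ρ)
    simpa [mul_one_div, div_eq_mul_inv] using h1
  have hPx0 : ‖R (A x₀ - b)‖ ^ 2 + ρ * ‖x₀‖ ^ 4 + (ρ - t) * ‖x₀‖ ^ 2 - t = 0 :=
    tendsto_nhds_unique ((hcont.tendsto x₀).comp hx₀) hlim0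
  -- uniqueness from the midpoint gap
  have huniq : ∀ y : H,
      ‖R (A y - b)‖ ^ 2 + ρ * ‖y‖ ^ 4 + (ρ - t) * ‖y‖ ^ 2 - t = 0 → y = x₀ := by
    intro y hy
    have h1 := hmid y x₀
    rw [hy, hPx0] at h1
    have h2 : ‖y - x₀‖ ^ 4 ≤ 0 := by nlinarith
    have h3 : ‖y - x₀‖ = 0 := by
      have h4 : ‖y - x₀‖ ^ 4 = 0 := le_antisymm h2 (by positivity)
      exact pow_eq_zero_iff (by norm_num) |>.mp h4
    have := norm_sub_eq_zero_iff.mp h3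
    exact this
  -- value of Q at x₀
  have hQx0 : ‖R (A x₀ - b)‖ ^ 2 / (1 + ‖x₀‖ ^ 2) + ρ * ‖x₀‖ ^ 2 = t := by
    have h1 := hPQ x₀
    rw [hPx0] at h1
    have h2 : (0:ℝ) < 1 + ‖x₀‖ ^ 2 := by positivity
    rcases mul_eq_zero.mp h1.symm with h | h
    · exact absurd h h2.ne'
    · linarith
  refine ⟨hsc, hco, ⟨x₀, ?_, ?_, ?_, ?_⟩, ?_⟩
  · intro x
    rw [hPx0]
    exact hP0 x
  · intro y hy
    have h1 := hy x₀
    rw [hPx0] at h1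
    exact huniq y (le_antisymm h1 (hP0 y))
  · intro x
    rw [hQx0]
    exact htle x
  · intro y hy
    have h1 := hy x₀
    rw [hQx0] at h1
    have h2 : ‖R (A y - b)‖ ^ 2 / (1 + ‖y‖ ^ 2) + ρ * ‖y‖ ^ 2 = t :=
      le_antisymm h1 (htle y)
    apply huniq
    rw [hPQ y, h2]
    ring
  · have h1 := htle 0
    simpa using h1
end

section
/- Let E₀ be a Banach space failing the Dunford–Pettis property, witnessed by weakly null sequences (yₙ) ⊂ E₀ and (yₙ') ⊂ E₀* with yₙ'(yₙ) → 1, and let E₁ be any Banach space with a nonzero vector y₁. Define compact operators Xₙ = yₙ'(·)y₁. Then (Xₙ) converges weakly to 0 in K(E₀,E₁) and (yₙ) converges weakly to 0 in E₀, but B(Xₙ, yₙ) = yₙ'(yₙ)y₁ → y₁ ≠ 0. Hence the bilinear map B : K(E₀,E₁) × E₀ → E₁, B(X,y) = Xy, is not weakly sequentially continuous. -/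
open Filter

/-- `E₀` a Banach space failing the Dunford–Pettis property, witnessed by
weakly null sequences `(yₙ) ⊆ E₀` and `(yₙ') ⊆ E₀*` with `yₙ'(yₙ) → 1`, and `E₁` a Banach
space with `y₁ ≠ 0`.  The compact rank-one operators `Xₙ = yₙ'(·)y₁` converge weakly to `0`
in the space of compact operators (tested against every continuous linear functional on
`L(E₀,E₁)`, equivalently on `K(E₀,E₁)` by Hahn–Banach) and `(yₙ)` is weakly null, but
`B(Xₙ,yₙ) = yₙ'(yₙ)y₁ → y₁ ≠ 0`; hence `B(X,y) = Xy` is not weakly sequentially continuous. -/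
theorem stmt17_dunford_pettis_failure_counterexample
    {E₀ E₁ : Type*} [NormedAddCommGroup E₀] [NormedSpace ℝ E₀] [CompleteSpace E₀]
    [NormedAddCommGroup E₁] [NormedSpace ℝ E₁] [CompleteSpace E₁]
    (y : ℕ → E₀) (y' : ℕ → (E₀ →L[ℝ] ℝ)) (y₁ : E₁) (hy₁ : y₁ ≠ 0)
    (hy_weak : ∀ g : E₀ →L[ℝ] ℝ, Tendsto (fun n => g (y n)) atTop (nhds 0))
    (hy'_weak : ∀ Φ : (E₀ →L[ℝ] ℝ) →L[ℝ] ℝ, Tendsto (fun n => Φ (y' n)) atTop (nhds 0))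
    (hpair : Tendsto (fun n => (y' n) (y n)) atTop (nhds 1)) :
    (∀ n : ℕ, IsCompactOperator ((y' n).smulRight y₁)) ∧
    (∀ Φ : (E₀ →L[ℝ] E₁) →L[ℝ] ℝ,
        Tendsto (fun n => Φ ((y' n).smulRight y₁)) atTop (nhds 0)) ∧
    Tendsto (fun n => ((y' n).smulRight y₁) (y n)) atTop (nhds y₁) ∧
    ¬ Tendsto (fun n => ((y' n).smulRight y₁) (y n)) atTop (nhds 0) := by
  have hlim : Tendsto (fun n => ((y' n).smulRight y₁) (y n)) atTop (nhds y₁) := by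
    have := hpair.smul_const y₁
    simpa using this
  refine ⟨?_, ?_, hlim, ?_⟩
  · intro n
    have hg : IsCompactOperator (fun t : ℝ => t • y₁) := by
      rw [isCompactOperator_iff_exists_mem_nhds_image_subset_compact]
      refine ⟨Set.Icc (-1 : ℝ) 1, Icc_mem_nhds (by norm_num) (by norm_num),
        (fun t : ℝ => t • y₁) '' Set.Icc (-1) 1,
        isCompact_Icc.image (by continuity), subset_rfl⟩
    have := hg.comp_clm (y' n)
    exact this
  · intro Φ
    have := hy'_weak (Φ.comp ((ContinuousLinearMap.smulRightL ℝ E₀ E₁).flip y₁))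
    simpa using this
  · intro h0
    exact hy₁ (tendsto_nhds_unique hlim h0)
end
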